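/- arXiv:1409.4351 — 2 statements merged into one kernel-verified Lean document; each statement's English description precedes it below -/
import Mathlib

section
/- Linear dyadic Carleson embedding: let P₀ be a dyadic cube and (α_Q) a Carleson sequence on the dyadic subcubes of P₀ with constant ‖α‖. Then for every g ∈ L²(P₀), Σ_{Q ∈ 𝒟(P₀)} α_Q ⟨g⟩_Q² |Q| ≤ 4 ‖α‖ ‖g‖²_{L²(P₀)}, where ⟨g⟩_Q = (1/|Q|)∫_Q g. -/
open MeasureTheory ENNReal Set
noncomputable section

/-- A dyadic cube in `ℝ^d`: generation `gen` (side length `2^{-gen}`) and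
position `pos` (lower-left corner `pos * 2^{-gen}`). -/
structure DyadicCube (d : ℕ) where
  gen : ℤ
  pos : Fin d → ℤ

namespace DyadicCube
variable {d : ℕ}

/-- The half-open cube represented by `Q`. -/
def toSet (Q : DyadicCube d) : Set (Fin d → ℝ) :=
  {x | ∀ i, (Q.pos i : ℝ) * (2 : ℝ) ^ (-Q.gen) ≤ x i ∧
        x i < ((Q.pos i : ℝ) + 1) * (2 : ℝ) ^ (-Q.gen)}

/-- Lebesgue measure of the cube. -/
def vol (Q : DyadicCube d) : ℝ≥0∞ := volume Q.toSet

/-- The dyadic parent of a cube. -/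
def parent (Q : DyadicCube d) : DyadicCube d :=
  ⟨Q.gen - 1, fun i => Int.fdiv (Q.pos i) 2⟩

/-- The `m`-th dyadic ancestor of a cube. -/
def ancestor (m : ℕ) (Q : DyadicCube d) : DyadicCube d := parent^[m] Q

/-- `Q.In P`: `Q` is a dyadic subcube of `P`. -/
def In (Q P : DyadicCube d) : Prop := P.gen ≤ Q.gen ∧ Q.toSet ⊆ P.toSet

/-- Average of a nonnegative (extended-real-valued) function over a cube. -/
def avg (Q : DyadicCube d) (f : (Fin d → ℝ) → ℝ≥0∞) : ℝ≥0∞ :=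
  (∫⁻ x in Q.toSet, f x) / Q.vol

/-- Average of a real-valued function over a cube. -/
def avgR (Q : DyadicCube d) (f : (Fin d → ℝ) → ℝ) : ℝ :=
  (∫ x in Q.toSet, f x) / (Q.vol).toReal

/-- `α` is a Carleson sequence on `𝒟(P₀)` with constant `C`. -/
def Carleson (P₀ : DyadicCube d) (α : DyadicCube d → ℝ≥0∞) (C : ℝ≥0∞) : Prop :=
  ∀ P : DyadicCube d, P.In P₀ →
    ∑' Q : {Q : DyadicCube d // Q.In P}, α Q.1 * Q.1.vol ≤ C * P.vol

/-- Real-valued version of the Carleson condition. -/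
def CarlesonR (P₀ : DyadicCube d) (α : DyadicCube d → ℝ) (C : ℝ) : Prop :=
  ∀ P : DyadicCube d, P.In P₀ →
    ∑' Q : {Q : DyadicCube d // Q.In P}, α Q.1 * (Q.1.vol).toReal ≤ C * (P.vol).toReal

/-- `η`-sparse collection of dyadic cubes. -/
def Sparse (η : ℝ≥0∞) (S : Set (DyadicCube d)) : Prop :=
  ∃ E : DyadicCube d → Set (Fin d → ℝ),
    (∀ Q ∈ S, MeasurableSet (E Q) ∧ E Q ⊆ Q.toSet ∧ η * Q.vol ≤ volume (E Q)) ∧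
    S.Pairwise fun Q Q' => Disjoint (E Q) (E Q')

/-- The `k`-linear positive dyadic shift of complexity `m` on `𝒟(P₀)`. -/
def shift (P₀ : DyadicCube d) (α : DyadicCube d → ℝ≥0∞) (m : ℕ) {k : ℕ}
    (f : Fin k → (Fin d → ℝ) → ℝ≥0∞) (x : Fin d → ℝ) : ℝ≥0∞ :=
  ∑' Q : {Q : DyadicCube d // Q.In P₀ ∧ P₀.gen + m ≤ Q.gen},
    α Q.1 * (∏ i, (ancestor m Q.1).avg (f i)) * Q.1.toSet.indicator 1 x

/-- The sliced shift `𝒜^{m;0}_{P,α}`, summing only over generations `jm`, `j ≥ 1`,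
relative to `P`. -/
def slicedShift (P : DyadicCube d) (α : DyadicCube d → ℝ≥0∞) (m : ℕ) {k : ℕ}
    (f : Fin k → (Fin d → ℝ) → ℝ≥0∞) (x : Fin d → ℝ) : ℝ≥0∞ :=
  ∑' Q : {Q : DyadicCube d // Q.In P ∧ ∃ j : ℕ, 1 ≤ j ∧ Q.gen = P.gen + j * m},
    α Q.1 * (∏ i, (ancestor m Q.1).avg (f i)) * Q.1.toSet.indicator 1 x

/-- Real-valued `k`-linear positive dyadic shift of complexity `m`. -/
def shiftR (P₀ : DyadicCube d) (α : DyadicCube d → ℝ) (m : ℕ) {k : ℕ}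
    (f : Fin k → (Fin d → ℝ) → ℝ) (x : Fin d → ℝ) : ℝ :=
  ∑' Q : {Q : DyadicCube d // Q.In P₀ ∧ P₀.gen + m ≤ Q.gen},
    α Q.1 * (∏ i, (ancestor m Q.1).avgR (f i)) * Q.1.toSet.indicator 1 x

/-- Real-valued sliced shift `𝒜^{m;0}_{P,α}`. -/
def slicedShiftR (P : DyadicCube d) (α : DyadicCube d → ℝ) (m : ℕ) {k : ℕ}
    (f : Fin k → (Fin d → ℝ) → ℝ) (x : Fin d → ℝ) : ℝ :=
  ∑' Q : {Q : DyadicCube d // Q.In P ∧ ∃ j : ℕ, 1 ≤ j ∧ Q.gen = P.gen + j * m},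
    α Q.1 * (∏ i, (ancestor m Q.1).avgR (f i)) * Q.1.toSet.indicator 1 x

/-- The positive sparse operator `𝒜⁰_𝒮`. -/
def sparseOp (S : Set (DyadicCube d)) {k : ℕ}
    (f : Fin k → (Fin d → ℝ) → ℝ≥0∞) (x : Fin d → ℝ) : ℝ≥0∞ :=
  ∑' Q : S, (∏ i, (Q : DyadicCube d).avg (f i)) * (Q : DyadicCube d).toSet.indicator 1 x

end DyadicCube

open DyadicCube

/-! ### Auxiliary lemmas for the Carleson embedding -/

namespace CarlE
variable {d : ℕ}

instance : Countable (DyadicCube d) :=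
  Function.Injective.countable (f := fun Q : DyadicCube d => (Q.gen, Q.pos))
    (fun Q Q' h => by cases Q; cases Q'; simpa using h)

lemma toSet_eq (Q : DyadicCube d) :
    Q.toSet = Set.pi Set.univ (fun i => Set.Ico ((Q.pos i : ℝ) * 2 ^ (-Q.gen))
      (((Q.pos i : ℝ) + 1) * 2 ^ (-Q.gen))) := by
  ext x; simp [DyadicCube.toSet, Set.mem_pi, Set.mem_Ico]

lemma meas_toSet (Q : DyadicCube d) : MeasurableSet Q.toSet := by
  rw [toSet_eq]; exact MeasurableSet.univ_pi fun i => measurableSet_Ico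

lemma toSet_nonempty (Q : DyadicCube d) : Q.toSet.Nonempty := by
  refine ⟨fun i => (Q.pos i : ℝ) * 2 ^ (-Q.gen), fun i => ⟨le_rfl, ?_⟩⟩
  have h2 : (0:ℝ) < 2 ^ (-Q.gen) := by positivity
  dsimp only
  nlinarith

lemma vol_eq (Q : DyadicCube d) :
    Q.vol = (ENNReal.ofReal ((2:ℝ) ^ (-Q.gen))) ^ d := by
  rw [DyadicCube.vol, toSet_eq, volume_pi_pi]
  have h : ∀ i : Fin d, volume (Set.Ico ((Q.pos i : ℝ) * 2 ^ (-Q.gen))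
      (((Q.pos i : ℝ) + 1) * 2 ^ (-Q.gen))) = ENNReal.ofReal ((2:ℝ) ^ (-Q.gen)) := by
    intro i; rw [Real.volume_Ico]; ring_nf
  simp only [h, Finset.prod_const, Finset.card_univ, Fintype.card_fin]

lemma vol_ne_zero (Q : DyadicCube d) : Q.vol ≠ 0 := by
  rw [vol_eq]
  exact pow_ne_zero _ (by simp [ENNReal.ofReal_eq_zero]; positivity)

lemma vol_ne_top (Q : DyadicCube d) : Q.vol ≠ ⊤ := by
  rw [vol_eq]; exact ENNReal.pow_ne_top ENNReal.ofReal_ne_top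

lemma parent_gen (Q : DyadicCube d) : (parent Q).gen = Q.gen - 1 := rfl

lemma subset_parent (Q : DyadicCube d) : Q.toSet ⊆ (parent Q).toSet := by
  intro x hx i
  obtain ⟨h1, h2⟩ := hx i
  set p := Q.pos i with hp
  have hfd1 : 2 * (p.fdiv 2) ≤ p := by
    rw [Int.fdiv_eq_ediv_of_nonneg _ (by norm_num)]
    have := Int.mul_ediv_add_emod p 2
    have := Int.emod_nonneg p (b := 2) (by norm_num)
    omega
  have hfd2 : p ≤ 2 * (p.fdiv 2) + 1 := by
    rw [Int.fdiv_eq_ediv_of_nonneg _ (by norm_num)]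
    have := Int.mul_ediv_add_emod p 2
    have := Int.emod_lt_of_pos p (b := 2) (by norm_num)
    omega
  have hzp : (2:ℝ) ^ (-(parent Q).gen) = 2 * 2 ^ (-Q.gen) := by
    rw [parent_gen]
    have : -(Q.gen - 1) = 1 + -Q.gen := by ring
    rw [this, zpow_add₀ (two_ne_zero), zpow_one]
  have hpos : (0:ℝ) < 2 ^ (-Q.gen) := by positivity
  have c1 : ((2 * p.fdiv 2 : ℤ) : ℝ) ≤ (p : ℝ) := by exact_mod_cast hfd1
  have c2 : ((p : ℤ) : ℝ) ≤ ((2 * p.fdiv 2 + 1 : ℤ) : ℝ) := by exact_mod_cast hfd2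
  push_cast at c1 c2
  constructor
  · show ((parent Q).pos i : ℝ) * 2 ^ (-(parent Q).gen) ≤ x i
    have : (parent Q).pos i = p.fdiv 2 := rfl
    rw [this, hzp]
    nlinarith
  · show x i < (((parent Q).pos i : ℝ) + 1) * 2 ^ (-(parent Q).gen)
    have : (parent Q).pos i = p.fdiv 2 := rfl
    rw [this, hzp]
    nlinarith

lemma ancestor_zero (Q : DyadicCube d) : ancestor 0 Q = Q := rfl

lemma ancestor_succ' (m : ℕ) (Q : DyadicCube d) :
    ancestor (m + 1) Q = parent (ancestor m Q) := by
  simp [ancestor, Function.iterate_succ_apply']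

lemma ancestor_gen (m : ℕ) (Q : DyadicCube d) :
    (ancestor m Q).gen = Q.gen - m := by
  induction m with
  | zero => simp [ancestor_zero]
  | succ n ih => rw [ancestor_succ', parent_gen, ih]; push_cast; ring

lemma subset_ancestor (m : ℕ) (Q : DyadicCube d) :
    Q.toSet ⊆ (ancestor m Q).toSet := by
  induction m with
  | zero => rw [ancestor_zero]
  | succ n ih => rw [ancestor_succ']; exact ih.trans (subset_parent _)

lemma ancestor_ancestor (k m : ℕ) (Q : DyadicCube d) :
    ancestor k (ancestor m Q) = ancestor (k + m) Q :=
  (Function.iterate_add_apply _ k m Q).symm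

lemma eq_of_gen_eq {Q P : DyadicCube d} (hgen : Q.gen = P.gen)
    {x : Fin d → ℝ} (hQ : x ∈ Q.toSet) (hP : x ∈ P.toSet) : Q = P := by
  obtain ⟨g, p⟩ := Q
  obtain ⟨g', p'⟩ := P
  simp only [DyadicCube.mk.injEq] at hgen ⊢
  subst hgen
  refine ⟨rfl, funext fun i => ?_⟩
  obtain ⟨hQ1, hQ2⟩ := hQ i
  obtain ⟨hP1, hP2⟩ := hP i
  have hpos : (0:ℝ) < 2 ^ (-g) := by positivity
  have h1 : ((p i : ℝ)) < (p' i) + 1 := by nlinarith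
  have h2 : ((p' i : ℝ)) < (p i) + 1 := by nlinarith
  have h1' : p i < p' i + 1 := by exact_mod_cast h1
  have h2' : p' i < p i + 1 := by exact_mod_cast h2
  omega

lemma ancestor_eq_of_mem {Q P : DyadicCube d} (h : P.gen ≤ Q.gen)
    {x : Fin d → ℝ} (hQ : x ∈ Q.toSet) (hP : x ∈ P.toSet) :
    ancestor (Q.gen - P.gen).toNat Q = P := by
  refine eq_of_gen_eq ?_ (subset_ancestor _ _ hQ) hP
  rw [ancestor_gen]
  omega

lemma subset_of_mem {Q P : DyadicCube d} (h : P.gen ≤ Q.gen)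
    {x : Fin d → ℝ} (hQ : x ∈ Q.toSet) (hP : x ∈ P.toSet) :
    Q.toSet ⊆ P.toSet := by
  rw [← ancestor_eq_of_mem h hQ hP]
  exact subset_ancestor _ _

lemma In_refl (Q : DyadicCube d) : Q.In Q := ⟨le_rfl, subset_rfl⟩

lemma mul_vol_le_of_lt_avg {Q : DyadicCube d} {g : (Fin d → ℝ) → ℝ≥0∞} {ℓ : ℝ≥0∞}
    (h : ℓ < Q.avg g) : ℓ * Q.vol ≤ ∫⁻ x in Q.toSet, g x := by
  rw [DyadicCube.avg] at h
  exact ((ENNReal.lt_div_iff_mul_lt (Or.inl (vol_ne_zero Q))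
    (Or.inl (vol_ne_top Q))).mp h).le

lemma volume_lt_set (a : ℝ≥0∞) (ha : a ≠ ⊤) :
    volume {t ∈ Set.Ioi (0:ℝ) | ENNReal.ofReal t < a} = a := by
  have h : {t ∈ Set.Ioi (0:ℝ) | ENNReal.ofReal t < a} = Set.Ioo 0 a.toReal := by
    ext t
    simp only [Set.mem_setOf_eq, Set.mem_Ioi, Set.mem_Ioo]
    constructor
    · rintro ⟨ht, hlt⟩; exact ⟨ht, (ENNReal.ofReal_lt_iff_lt_toReal ht.le ha).mp hlt⟩
    · rintro ⟨ht, hlt⟩; exact ⟨ht, (ENNReal.ofReal_lt_iff_lt_toReal ht.le ha).mpr hlt⟩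
  rw [h, Real.volume_Ioo, sub_zero, ENNReal.ofReal_toReal ha]

lemma measurableSet_lt_set (a : ℝ≥0∞) :
    MeasurableSet {s : ℝ | ENNReal.ofReal s < a} :=
  ENNReal.measurable_ofReal (measurableSet_Iio (a := a))

lemma sq_eq_lintegral (a : ℝ≥0∞) (ha : a ≠ ⊤) :
    a ^ 2 = 2 * ∫⁻ t in Set.Ioi (0:ℝ),
      Set.indicator {s : ℝ | ENNReal.ofReal s < a} (fun s => ENNReal.ofReal s) t := by
  set c := a.toReal with hc
  have hc0 : 0 ≤ c := ENNReal.toReal_nonneg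
  have hset : {s : ℝ | ENNReal.ofReal s < a} ∩ Set.Ioi 0 = Set.Ioo 0 c := by
    ext t
    simp only [Set.mem_inter_iff, Set.mem_setOf_eq, Set.mem_Ioi, Set.mem_Ioo]
    constructor
    · rintro ⟨hlt, ht⟩; exact ⟨ht, (ENNReal.ofReal_lt_iff_lt_toReal ht.le ha).mp hlt⟩
    · rintro ⟨ht, hlt⟩; exact ⟨(ENNReal.ofReal_lt_iff_lt_toReal ht.le ha).mpr hlt, ht⟩
  have h1 : ∫⁻ t in Set.Ioi (0:ℝ),
      Set.indicator {s : ℝ | ENNReal.ofReal s < a} (fun s => ENNReal.ofReal s) t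
      = ∫⁻ t in Set.Ioo (0:ℝ) c, ENNReal.ofReal t := by
    rw [lintegral_indicator (measurableSet_lt_set a),
      Measure.restrict_restrict (measurableSet_lt_set a), hset]
  have hInt : IntegrableOn (fun t : ℝ => t) (Set.Ioo 0 c) volume := by
    have : IntervalIntegrable (fun t : ℝ => t) volume 0 c :=
      intervalIntegral.intervalIntegrable_id
    exact ((intervalIntegrable_iff_integrableOn_Ioc_of_le hc0).mp this).mono_set
      Set.Ioo_subset_Ioc_self
  have h2 : ∫⁻ t in Set.Ioo (0:ℝ) c, ENNReal.ofReal t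
      = ENNReal.ofReal (c ^ 2 / 2) := by
    rw [← ofReal_integral_eq_lintegral_ofReal hInt]
    · congr 1
      rw [← MeasureTheory.integral_Ioc_eq_integral_Ioo,
        ← intervalIntegral.integral_of_le hc0]
      simpa using (integral_id (a := 0) (b := c))
    · filter_upwards [self_mem_ae_restrict measurableSet_Ioo] with t ht
      exact le_of_lt ht.1
  rw [h1, h2]
  have : (2 : ℝ≥0∞) * ENNReal.ofReal (c ^ 2 / 2) = ENNReal.ofReal (c ^ 2) := by
    rw [← ENNReal.ofReal_ofNat 2, ← ENNReal.ofReal_mul (by norm_num)]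
    congr 1; ring
  rw [this, ENNReal.ofReal_pow hc0, hc, ENNReal.ofReal_toReal ha]

/-- The stopping-time lemma: for a family of subcubes of `P₀` with average `> ℓ`
(closed under the defining conditions), the Carleson sum is controlled by the
measure of the union, and the union satisfies the weak-type bound. -/
lemma stopping {ι : Type} [Countable ι] {P₀ : DyadicCube d}
    {α : DyadicCube d → ℝ≥0∞} {A : ℝ≥0∞} (hα : Carleson P₀ α A)
    {g : (Fin d → ℝ) → ℝ≥0∞} (hg : Measurable g) (ℓ : ℝ≥0∞) (N : ℕ)
    (Qf : ι → DyadicCube d) (hinj : Function.Injective Qf)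
    (hIn : ∀ i, (Qf i).In P₀) (hgen : ∀ i, (Qf i).gen ≤ P₀.gen + N)
    (havg : ∀ i, ℓ < (Qf i).avg g)
    (hsurj : ∀ R : DyadicCube d, R.In P₀ → R.gen ≤ P₀.gen + N → ℓ < R.avg g →
      ∃ i, Qf i = R) :
    (∑' i, α (Qf i) * (Qf i).vol ≤ A * volume (⋃ i, (Qf i).toSet)) ∧
    ℓ * volume (⋃ i, (Qf i).toSet) ≤ ∫⁻ x in ⋃ i, (Qf i).toSet, g x := by
  classical
  set Pp : ι → ℕ → Prop := fun i m => ℓ < ((ancestor m (Qf i)).avg g) with hPp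
  set nn : ι → ℕ := fun i => ((Qf i).gen - P₀.gen).toNat with hnn
  set mi : ι → ℕ := fun i => Nat.findGreatest (Pp i) (nn i) with hmi
  set S : ι → DyadicCube d := fun i => ancestor (mi i) (Qf i) with hS
  have f0 : ∀ i, Pp i (mi i) := fun i =>
    Nat.findGreatest_spec (Nat.zero_le _) (by simp [hPp, ancestor_zero]; exact havg i)
  have f1 : ∀ i, (S i).gen = (Qf i).gen - mi i := fun i => ancestor_gen _ _
  have f2 : ∀ i, P₀.gen ≤ (S i).gen := by
    intro i
    have h1 : mi i ≤ nn i := Nat.findGreatest_le _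
    have h2 : P₀.gen ≤ (Qf i).gen := (hIn i).1
    have := f1 i
    simp only [hnn] at h1
    omega
  have f3 : ∀ i, (Qf i).toSet ⊆ (S i).toSet := fun i => subset_ancestor _ _
  have f4 : ∀ i, (S i).toSet ⊆ P₀.toSet := by
    intro i
    obtain ⟨x, hx⟩ := toSet_nonempty (Qf i)
    exact subset_of_mem (f2 i) (f3 i hx) ((hIn i).2 hx)
  have f5 : ∀ i, (S i).In P₀ := fun i => ⟨f2 i, f4 i⟩
  have f6 : ∀ i, ℓ < (S i).avg g := f0
  have f7 : ∀ i, (S i).gen ≤ P₀.gen + N := by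
    intro i
    have := f1 i
    have := hgen i
    omega
  have hQfInS : ∀ i, (Qf i).In (S i) := by
    intro i
    refine ⟨?_, f3 i⟩
    have := f1 i; omega
  have key : ∀ i j, (S j).gen ≤ (S i).gen → ¬ Disjoint (S i).toSet (S j).toSet →
      S i = S j := by
    intro i j hle hnd
    rw [Set.not_disjoint_iff] at hnd
    obtain ⟨x, hxi, hxj⟩ := hnd
    have hanc : ancestor ((S i).gen - (S j).gen).toNat (S i) = S j :=
      ancestor_eq_of_mem hle hxi hxj
    set k := ((S i).gen - (S j).gen).toNat with hk
    have hkn : k + mi i ≤ nn i := by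
      have h1 := f1 i
      have h2 := f2 j
      have h3 : (S j).gen = (S i).gen - k := by
        rw [← hanc, ancestor_gen]
      have h4 : P₀.gen ≤ (Qf i).gen := (hIn i).1
      simp only [hnn]
      omega
    have hPk : Pp i (k + mi i) := by
      have : ancestor (k + mi i) (Qf i) = S j := by
        rw [← ancestor_ancestor]; exact hanc
      simpa [hPp, this] using f6 j
    have hle2 : k + mi i ≤ mi i := Nat.le_findGreatest hkn hPk
    have hk0 : k = 0 := by omega
    rw [hk0, ancestor_zero] at hanc
    exact hanc
  -- the range of S, as a countable family of pairwise disjoint cubes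
  haveI : Countable (Set.range S) := (Set.countable_range S).to_subtype
  have hdisj : Pairwise (Function.onFun Disjoint fun y : Set.range S => (y : DyadicCube d).toSet) := by
    rintro ⟨_, i, rfl⟩ ⟨_, j, rfl⟩ hne
    have hne' : S i ≠ S j := fun h => hne (Subtype.ext h)
    show Disjoint (S i).toSet (S j).toSet
    by_contra hnd
    rcases le_total ((S j).gen) ((S i).gen) with h | h
    · exact hne' (key i j h hnd)
    · exact hne' ((key j i h (fun h' => hnd h'.symm)).symm)
  have hU : (⋃ y : Set.range S, (y : DyadicCube d).toSet) = ⋃ i, (Qf i).toSet := by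
    apply Set.Subset.antisymm
    · rintro x hx
      simp only [Set.mem_iUnion] at hx ⊢
      obtain ⟨⟨_, i, rfl⟩, hx⟩ := hx
      obtain ⟨i', hi'⟩ := hsurj (S i) (f5 i) (f7 i) (f6 i)
      exact ⟨i', by rw [hi']; exact hx⟩
    · rintro x hx
      simp only [Set.mem_iUnion] at hx ⊢
      obtain ⟨i, hx⟩ := hx
      exact ⟨⟨S i, Set.mem_range_self i⟩, f3 i hx⟩
  have hmeasU : volume (⋃ i, (Qf i).toSet)
      = ∑' y : Set.range S, (y : DyadicCube d).vol := by
    rw [← hU, measure_iUnion hdisj (fun y => meas_toSet _)]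
    rfl
  constructor
  · -- Carleson sum bound
    have h1 : ∑' i, α (Qf i) * (Qf i).vol
        = ∑' R : DyadicCube d, ∑' x : ↑(S ⁻¹' {R}), α (Qf x.1) * (Qf x.1).vol :=
      (tsum_fiberwise (fun i => α (Qf i) * (Qf i).vol) S).symm
    rw [h1]
    have h2 : ∀ R : DyadicCube d,
        ∑' x : ↑(S ⁻¹' {R}), α (Qf x.1) * (Qf x.1).vol
          ≤ Set.indicator (Set.range S) (fun R => A * R.vol) R := by
      intro R
      by_cases hR : R ∈ Set.range S
      · rw [Set.indicator_of_mem hR]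
        obtain ⟨j, hj⟩ := hR
        have hle : ∑' x : ↑(S ⁻¹' {R}), α (Qf x.1) * (Qf x.1).vol
            ≤ ∑' R' : {R' : DyadicCube d // R'.In R}, α R'.1 * R'.1.vol := by
          apply ENNReal.summable.tsum_le_tsum_of_inj
            (fun x => (⟨Qf x.1, by
              have hx : S x.1 = R := x.2
              have h := hQfInS x.1
              rwa [hx] at h⟩ : {R' : DyadicCube d // R'.In R}))
          · intro x x' hxx
            have : Qf x.1 = Qf x'.1 := congrArg Subtype.val hxx
            exact Subtype.ext (hinj this)
          · intro c _; exact zero_le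
          · intro x; exact le_rfl
          · exact ENNReal.summable
        refine hle.trans (hα R ?_)
        rw [← hj]; exact f5 j
      · rw [Set.indicator_of_notMem hR]
        haveI : IsEmpty ↑(S ⁻¹' {R}) := ⟨fun x => hR ⟨x.1, x.2⟩⟩
        rw [tsum_empty]
    calc ∑' R : DyadicCube d, ∑' x : ↑(S ⁻¹' {R}), α (Qf x.1) * (Qf x.1).vol
        ≤ ∑' R : DyadicCube d, Set.indicator (Set.range S) (fun R => A * R.vol) R :=
          ENNReal.summable.tsum_le_tsum h2 ENNReal.summable
      _ = ∑' y : ↑(Set.range S), A * (y : DyadicCube d).vol :=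
          (tsum_subtype (Set.range S) (fun R => A * R.vol)).symm
      _ = A * ∑' y : ↑(Set.range S), (y : DyadicCube d).vol := ENNReal.tsum_mul_left
      _ = A * volume (⋃ i, (Qf i).toSet) := by rw [hmeasU]
  · -- weak-type bound
    rw [hmeasU, ← ENNReal.tsum_mul_left, ← hU,
      lintegral_iUnion (fun y => meas_toSet _) hdisj g]
    refine ENNReal.summable.tsum_le_tsum (fun y => ?_) ENNReal.summable
    obtain ⟨yv, j, rfl⟩ := y
    exact mul_vol_le_of_lt_avg (f6 j)

lemma lintegral_mul_le_sq {X : Type*} [MeasurableSpace X] (μ : Measure X)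
    {f h : X → ℝ≥0∞} (hf : Measurable f) (hh : Measurable h) :
    ∫⁻ x, f x * h x ∂μ
      ≤ (∫⁻ x, f x ^ 2 ∂μ) ^ (1/2 : ℝ) * (∫⁻ x, h x ^ 2 ∂μ) ^ (1/2 : ℝ) := by
  have hconj : Real.HolderConjugate 2 2 := Real.HolderConjugate.two_two
  have H := ENNReal.lintegral_mul_le_Lp_mul_Lq μ hconj hf.aemeasurable hh.aemeasurable
  have e : ∀ u : ℝ≥0∞, u ^ (2:ℝ) = u ^ 2 := fun u => by
    rw [show (2:ℝ) = ((2:ℕ):ℝ) by norm_num, ENNReal.rpow_natCast]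
  simp only [Pi.mul_apply, e] at H
  exact H

lemma le_four_of_le_sqrt {T G : ℝ≥0∞} (hT : T ≠ ⊤) (hG : G ≠ ⊤)
    (h : T ≤ 2 * (G ^ (1/2:ℝ) * T ^ (1/2:ℝ))) : T ≤ 4 * G := by
  by_cases hT0 : T = 0
  · rw [hT0]; exact zero_le
  by_cases hG0 : G = 0
  · rw [hG0, ENNReal.zero_rpow_of_pos (by norm_num)] at h
    simp only [zero_mul, mul_zero, nonpos_iff_eq_zero] at h
    exact absurd h hT0
  · have hr0 : T ^ (1/2:ℝ) ≠ 0 := by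
      simp [ENNReal.rpow_eq_zero_iff, hT0, hT]
    have hrt : T ^ (1/2:ℝ) ≠ ⊤ := ENNReal.rpow_ne_top_of_nonneg (by norm_num) hT
    have key : T ^ (1/2:ℝ) ≤ 2 * G ^ (1/2:ℝ) := by
      rw [← ENNReal.mul_le_mul_iff_left hr0 hrt]
      calc T ^ (1/2:ℝ) * T ^ (1/2:ℝ) = T := by
            rw [← ENNReal.rpow_add _ _ hT0 hT]; norm_num
        _ ≤ 2 * (G ^ (1/2:ℝ) * T ^ (1/2:ℝ)) := h
        _ = 2 * G ^ (1/2:ℝ) * T ^ (1/2:ℝ) := by ring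
    calc T = T ^ (1/2:ℝ) * T ^ (1/2:ℝ) := by
          rw [← ENNReal.rpow_add _ _ hT0 hT]; norm_num
      _ ≤ (2 * G ^ (1/2:ℝ)) * (2 * G ^ (1/2:ℝ)) := mul_le_mul' key key
      _ = 4 * (G ^ (1/2:ℝ) * G ^ (1/2:ℝ)) := by ring
      _ = 4 * G := by rw [← ENNReal.rpow_add _ _ hG0 hG]; norm_num

set_option maxHeartbeats 2000000 in
lemma truncated_bound {P₀ : DyadicCube d} {α : DyadicCube d → ℝ≥0∞} {A : ℝ≥0∞}
    (hα : Carleson P₀ α A) {g : (Fin d → ℝ) → ℝ≥0∞} (hg : Measurable g)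
    (hG : (∫⁻ x in P₀.toSet, g x ^ 2) ≠ ⊤) (N : ℕ) :
    ∑' Q : {Q : DyadicCube d // Q.In P₀ ∧ Q.gen ≤ P₀.gen + (N:ℤ)},
        α Q.1 * (Q.1.avg g) ^ 2 * Q.1.vol
      ≤ 4 * A * ∫⁻ x in P₀.toSet, g x ^ 2 := by
  classical
  set G := ∫⁻ x in P₀.toSet, g x ^ 2 with hGdef
  -- ∫ g over P₀ is finite
  have hcs0 : ∫⁻ x in P₀.toSet, g x ≤ G ^ (1/2:ℝ) * P₀.vol ^ (1/2:ℝ) := by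
    have H := lintegral_mul_le_sq (volume.restrict P₀.toSet) hg
      (h := fun _ => 1) measurable_const
    simpa [setLIntegral_one, DyadicCube.vol] using H
  have hGint : (∫⁻ x in P₀.toSet, g x) ≠ ⊤ := by
    refine ne_top_of_le_ne_top ?_ hcs0
    exact (ENNReal.mul_lt_top (ENNReal.rpow_ne_top_of_nonneg (by norm_num) hG).lt_top
      (ENNReal.rpow_ne_top_of_nonneg (by norm_num) (vol_ne_top P₀)).lt_top).ne
  have havgfin : ∀ Q : DyadicCube d, Q.toSet ⊆ P₀.toSet → Q.avg g ≠ ⊤ := by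
    intro Q hsub
    rw [DyadicCube.avg]
    exact (ENNReal.div_lt_top (ne_top_of_le_ne_top hGint (lintegral_mono_set hsub))
      (vol_ne_zero Q)).ne
  -- the truncated dyadic maximal function
  set M : (Fin d → ℝ) → ℝ≥0∞ := fun x =>
    ⨆ Q : {Q : DyadicCube d // Q.In P₀ ∧ Q.gen ≤ P₀.gen + (N:ℤ)},
      Set.indicator Q.1.toSet (fun _ => Q.1.avg g) x with hM
  have hMmeas : Measurable M :=
    Measurable.iSup fun Q => measurable_const.indicator (meas_toSet _)
  set C := (∫⁻ x in P₀.toSet, g x) / (ENNReal.ofReal ((2:ℝ) ^ (-(P₀.gen + (N:ℤ))))) ^ d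
    with hC
  have hCtop : C ≠ ⊤ := by
    refine (ENNReal.div_lt_top hGint ?_).ne
    exact pow_ne_zero _ (by simp only [ne_eq, ENNReal.ofReal_eq_zero, not_le]; positivity)
  have hvol_lb : ∀ Q : DyadicCube d, Q.gen ≤ P₀.gen + (N:ℤ) →
      (ENNReal.ofReal ((2:ℝ) ^ (-(P₀.gen + (N:ℤ))))) ^ d ≤ Q.vol := by
    intro Q hQ
    rw [vol_eq]
    refine pow_le_pow_left₀ (zero_le) (ENNReal.ofReal_le_ofReal ?_) d
    exact zpow_le_zpow_right₀ one_le_two (by omega)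
  have havgle : ∀ Q : DyadicCube d, Q.In P₀ → Q.gen ≤ P₀.gen + (N:ℤ) → Q.avg g ≤ C := by
    intro Q h1 h2
    rw [DyadicCube.avg, hC]
    exact ENNReal.div_le_div (lintegral_mono_set h1.2) (hvol_lb Q h2)
  have hMle : ∀ x, M x ≤ C * Set.indicator P₀.toSet 1 x := by
    intro x
    refine iSup_le fun Q => ?_
    by_cases hx : x ∈ Q.1.toSet
    · rw [Set.indicator_of_mem hx]
      have hxP : x ∈ P₀.toSet := Q.2.1.2 hx
      rw [Set.indicator_of_mem hxP]
      simpa using havgle Q.1 Q.2.1 Q.2.2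
    · rw [Set.indicator_of_notMem hx]; exact zero_le
  have hMleC : ∀ x, M x ≤ C := by
    intro x
    refine (hMle x).trans ?_
    by_cases hx : x ∈ P₀.toSet
    · simp [Set.indicator_of_mem hx]
    · simp [Set.indicator_of_notMem hx]
  have hMtop : ∀ x, M x ≠ ⊤ := fun x => ne_top_of_le_ne_top hCtop (hMleC x)
  have hM0 : ∀ x, x ∉ P₀.toSet → M x = 0 := by
    intro x hx
    have h := hMle x
    rw [Set.indicator_of_notMem hx, mul_zero] at h
    exact le_antisymm h (zero_le)
  -- level sets of M
  have hlevel : ∀ ℓ : ℝ≥0∞, {x | ℓ < M x} =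
      ⋃ q : ↥{q : {Q : DyadicCube d // Q.In P₀ ∧ Q.gen ≤ P₀.gen + (N:ℤ)} |
          ℓ < q.1.avg g}, q.1.1.toSet := by
    intro ℓ
    ext x
    simp only [Set.mem_setOf_eq, Set.mem_iUnion, hM, lt_iSup_iff]
    constructor
    · rintro ⟨Q, hQ⟩
      by_cases hx : x ∈ Q.1.toSet
      · rw [Set.indicator_of_mem hx] at hQ
        exact ⟨⟨Q, hQ⟩, hx⟩
      · rw [Set.indicator_of_notMem hx] at hQ
        exact absurd hQ (by simp)
    · rintro ⟨⟨Q, hQ⟩, hx⟩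
      exact ⟨Q, by rw [Set.indicator_of_mem hx]; exact hQ⟩
  have hUmeas : ∀ ℓ : ℝ≥0∞, MeasurableSet {x | ℓ < M x} :=
    fun ℓ => measurableSet_lt measurable_const hMmeas
  have hμantimeas : Measurable (fun t : ℝ => volume {x | ENNReal.ofReal t < M x}) := by
    apply Antitone.measurable
    intro t t' htt'
    exact measure_mono (fun x hx => lt_of_le_of_lt (ENNReal.ofReal_le_ofReal htt') hx)
  -- the two stopping-time consequences at each level
  have hstop : ∀ t : ℝ,
      (ENNReal.ofReal t *
        ∑' q : ↥{q : {Q : DyadicCube d // Q.In P₀ ∧ Q.gen ≤ P₀.gen + (N:ℤ)} |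
            ENNReal.ofReal t < q.1.avg g}, α q.1.1 * q.1.1.vol)
        ≤ A * (ENNReal.ofReal t * volume {x | ENNReal.ofReal t < M x}) ∧
      ENNReal.ofReal t * volume {x | ENNReal.ofReal t < M x}
        ≤ ∫⁻ x, g x * Set.indicator {x' | ENNReal.ofReal t < M x'} 1 x := by
    intro t
    have H := stopping (ι := ↥{q : {Q : DyadicCube d // Q.In P₀ ∧
        Q.gen ≤ P₀.gen + (N:ℤ)} | ENNReal.ofReal t < q.1.avg g}) hα hg
      (ENNReal.ofReal t) N (fun q => q.1.1)
      (fun a b hab => Subtype.ext (Subtype.ext hab))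
      (fun q => q.1.2.1) (fun q => q.1.2.2) (fun q => q.2)
      (fun R h1 h2 h3 => ⟨⟨⟨R, h1, h2⟩, h3⟩, rfl⟩)
    obtain ⟨H1, H2⟩ := H
    rw [← hlevel (ENNReal.ofReal t)] at H1 H2
    constructor
    · calc ENNReal.ofReal t * ∑' q : ↥{q : {Q : DyadicCube d // Q.In P₀ ∧
            Q.gen ≤ P₀.gen + (N:ℤ)} | ENNReal.ofReal t < q.1.avg g}, α q.1.1 * q.1.1.vol
          ≤ ENNReal.ofReal t * (A * volume {x | ENNReal.ofReal t < M x}) :=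
            mul_le_mul_right H1 _
        _ = A * (ENNReal.ofReal t * volume {x | ENNReal.ofReal t < M x}) := by ring
    · rw [← lintegral_indicator (hUmeas (ENNReal.ofReal t))] at H2
      refine H2.trans (le_of_eq (lintegral_congr fun x => ?_))
      by_cases hx : x ∈ {x' | ENNReal.ofReal t < M x'}
      · simp [Set.indicator_of_mem hx]
      · simp [Set.indicator_of_notMem hx]
  -- layer cake for the sum
  have hFmeas : ∀ a : ℝ≥0∞, Measurable fun t : ℝ =>
      Set.indicator {s : ℝ | ENNReal.ofReal s < a} (fun s => ENNReal.ofReal s) t :=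
    fun a => ENNReal.measurable_ofReal.indicator (measurableSet_lt_set a)
  have stepA : ∑' Q : {Q : DyadicCube d // Q.In P₀ ∧ Q.gen ≤ P₀.gen + (N:ℤ)},
      α Q.1 * (Q.1.avg g) ^ 2 * Q.1.vol
      = 2 * ∫⁻ t in Set.Ioi (0:ℝ),
          ∑' Q : {Q : DyadicCube d // Q.In P₀ ∧ Q.gen ≤ P₀.gen + (N:ℤ)},
            (α Q.1 * Q.1.vol) *
              Set.indicator {s : ℝ | ENNReal.ofReal s < Q.1.avg g}
                (fun s => ENNReal.ofReal s) t := by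
    have h1 : ∀ Q : {Q : DyadicCube d // Q.In P₀ ∧ Q.gen ≤ P₀.gen + (N:ℤ)},
        α Q.1 * (Q.1.avg g) ^ 2 * Q.1.vol
        = 2 * ∫⁻ t in Set.Ioi (0:ℝ), (α Q.1 * Q.1.vol) *
            Set.indicator {s : ℝ | ENNReal.ofReal s < Q.1.avg g}
              (fun s => ENNReal.ofReal s) t := by
      intro Q
      rw [lintegral_const_mul _ (hFmeas _), sq_eq_lintegral (Q.1.avg g) (havgfin _ Q.2.1.2)]
      ring
    rw [tsum_congr h1, ENNReal.tsum_mul_left]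
    congr 1
    exact (lintegral_tsum fun Q : {Q : DyadicCube d // Q.In P₀ ∧ Q.gen ≤ P₀.gen + (N:ℤ)} =>
      ((hFmeas (Q.1.avg g)).const_mul _).aemeasurable).symm
  -- pointwise domination at each level
  have stepB : ∀ t : ℝ,
      (∑' Q : {Q : DyadicCube d // Q.In P₀ ∧ Q.gen ≤ P₀.gen + (N:ℤ)},
        (α Q.1 * Q.1.vol) * Set.indicator {s : ℝ | ENNReal.ofReal s < Q.1.avg g}
          (fun s => ENNReal.ofReal s) t)
      ≤ A * (ENNReal.ofReal t * volume {x | ENNReal.ofReal t < M x}) := by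
    intro t
    have h1 : ∀ Q : {Q : DyadicCube d // Q.In P₀ ∧ Q.gen ≤ P₀.gen + (N:ℤ)},
        (α Q.1 * Q.1.vol) * Set.indicator {s : ℝ | ENNReal.ofReal s < Q.1.avg g}
          (fun s => ENNReal.ofReal s) t
        = ENNReal.ofReal t * Set.indicator
            {q : {Q : DyadicCube d // Q.In P₀ ∧ Q.gen ≤ P₀.gen + (N:ℤ)} |
              ENNReal.ofReal t < q.1.avg g}
            (fun q => α q.1 * q.1.vol) Q := by
      intro Q
      rw [Set.indicator_apply, Set.indicator_apply]
      simp only [Set.mem_setOf_eq]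
      split_ifs with h
      · ring
      · simp
    rw [tsum_congr h1, ENNReal.tsum_mul_left, ← tsum_subtype]
    exact (hstop t).1
  have stepC : ∑' Q : {Q : DyadicCube d // Q.In P₀ ∧ Q.gen ≤ P₀.gen + (N:ℤ)},
      α Q.1 * (Q.1.avg g) ^ 2 * Q.1.vol
      ≤ A * (2 * ∫⁻ t in Set.Ioi (0:ℝ),
          ENNReal.ofReal t * volume {x | ENNReal.ofReal t < M x}) := by
    rw [stepA]
    calc 2 * ∫⁻ t in Set.Ioi (0:ℝ),
          ∑' Q : {Q : DyadicCube d // Q.In P₀ ∧ Q.gen ≤ P₀.gen + (N:ℤ)},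
            (α Q.1 * Q.1.vol) * Set.indicator {s : ℝ | ENNReal.ofReal s < Q.1.avg g}
              (fun s => ENNReal.ofReal s) t
        ≤ 2 * ∫⁻ t in Set.Ioi (0:ℝ),
            A * (ENNReal.ofReal t * volume {x | ENNReal.ofReal t < M x}) :=
          mul_le_mul_right (lintegral_mono fun t => stepB t) 2
      _ = A * (2 * ∫⁻ t in Set.Ioi (0:ℝ),
            ENNReal.ofReal t * volume {x | ENNReal.ofReal t < M x}) := by
          rw [lintegral_const_mul A (f := fun t : ℝ => ENNReal.ofReal t * volume {x | ENNReal.ofReal t < M x}) (ENNReal.measurable_ofReal.mul hμantimeas)]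
          ring
  -- layer cake for M
  have hjointmeas : Measurable (Function.uncurry fun (x : Fin d → ℝ) (t : ℝ) =>
      Set.indicator {s : ℝ | ENNReal.ofReal s < M x} (fun s => ENNReal.ofReal s) t) := by
    have e : (Function.uncurry fun (x : Fin d → ℝ) (t : ℝ) =>
        Set.indicator {s : ℝ | ENNReal.ofReal s < M x} (fun s => ENNReal.ofReal s) t)
        = Set.indicator {p : (Fin d → ℝ) × ℝ | ENNReal.ofReal p.2 < M p.1}
            (fun p => ENNReal.ofReal p.2) := by
      ext ⟨x, t⟩
      simp [Function.uncurry, Set.indicator_apply]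
    rw [e]
    exact (ENNReal.measurable_ofReal.comp measurable_snd).indicator
      (measurableSet_lt (ENNReal.measurable_ofReal.comp measurable_snd)
        (hMmeas.comp measurable_fst))
  have stepD : (∫⁻ x, M x ^ 2)
      = 2 * ∫⁻ t in Set.Ioi (0:ℝ),
          ENNReal.ofReal t * volume {x | ENNReal.ofReal t < M x} := by
    have h1 : ∀ x, M x ^ 2 = 2 * ∫⁻ t in Set.Ioi (0:ℝ),
        Set.indicator {s : ℝ | ENNReal.ofReal s < M x} (fun s => ENNReal.ofReal s) t :=
      fun x => sq_eq_lintegral (M x) (hMtop x)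
    calc ∫⁻ x, M x ^ 2
        = ∫⁻ x, 2 * ∫⁻ t in Set.Ioi (0:ℝ),
            Set.indicator {s : ℝ | ENNReal.ofReal s < M x}
              (fun s => ENNReal.ofReal s) t := lintegral_congr h1
      _ = 2 * ∫⁻ x, ∫⁻ t in Set.Ioi (0:ℝ),
            Set.indicator {s : ℝ | ENNReal.ofReal s < M x}
              (fun s => ENNReal.ofReal s) t :=
          lintegral_const_mul 2 hjointmeas.lintegral_prod_right
      _ = 2 * ∫⁻ t in Set.Ioi (0:ℝ), ∫⁻ x,
            Set.indicator {s : ℝ | ENNReal.ofReal s < M x}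
              (fun s => ENNReal.ofReal s) t := by
          rw [lintegral_lintegral_swap hjointmeas.aemeasurable]
      _ = 2 * ∫⁻ t in Set.Ioi (0:ℝ),
            ENNReal.ofReal t * volume {x | ENNReal.ofReal t < M x} := by
          congr 1
          refine lintegral_congr fun t => ?_
          have e : (fun x => Set.indicator {s : ℝ | ENNReal.ofReal s < M x}
              (fun s => ENNReal.ofReal s) t)
              = Set.indicator {x | ENNReal.ofReal t < M x}
                  (fun _ => ENNReal.ofReal t) := by
            ext x; simp [Set.indicator_apply]
          rw [e, lintegral_indicator_const (hUmeas _)]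
  -- weak-type step
  have hjoint2 : Measurable (Function.uncurry fun (x : Fin d → ℝ) (t : ℝ) =>
      g x * Set.indicator {x' | ENNReal.ofReal t < M x'} 1 x) := by
    have e : (Function.uncurry fun (x : Fin d → ℝ) (t : ℝ) =>
        g x * Set.indicator {x' | ENNReal.ofReal t < M x'} 1 x)
        = fun p : (Fin d → ℝ) × ℝ => g p.1 *
            Set.indicator {p' : (Fin d → ℝ) × ℝ | ENNReal.ofReal p'.2 < M p'.1} 1 p := by
      ext ⟨x, t⟩
      simp [Function.uncurry, Set.indicator_apply]
    rw [e]
    exact (hg.comp measurable_fst).mul (measurable_one.indicator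
      (measurableSet_lt (ENNReal.measurable_ofReal.comp measurable_snd)
        (hMmeas.comp measurable_fst)))
  have stepE : (2 : ℝ≥0∞) * (∫⁻ t in Set.Ioi (0:ℝ),
        ENNReal.ofReal t * volume {x | ENNReal.ofReal t < M x})
      ≤ 2 * ∫⁻ x, g x * M x := by
    calc (2 : ℝ≥0∞) * ∫⁻ t in Set.Ioi (0:ℝ),
          ENNReal.ofReal t * volume {x | ENNReal.ofReal t < M x}
        ≤ 2 * ∫⁻ t in Set.Ioi (0:ℝ), ∫⁻ x,
            g x * Set.indicator {x' | ENNReal.ofReal t < M x'} 1 x :=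
          mul_le_mul_right (lintegral_mono fun t => (hstop t).2) 2
      _ = 2 * ∫⁻ x, ∫⁻ t in Set.Ioi (0:ℝ),
            g x * Set.indicator {x' | ENNReal.ofReal t < M x'} 1 x := by
          rw [← lintegral_lintegral_swap hjoint2.aemeasurable]
      _ = 2 * ∫⁻ x, g x * M x := by
          congr 1
          refine lintegral_congr fun x => ?_
          have e : ∀ t : ℝ, g x * Set.indicator {x' | ENNReal.ofReal t < M x'} 1 x
              = g x * Set.indicator {t' : ℝ | ENNReal.ofReal t' < M x} (fun _ => 1) t := by
            intro t; simp [Set.indicator_apply]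
          rw [lintegral_congr e, lintegral_const_mul (g x)
            (measurable_const.indicator (measurableSet_lt_set (M x))),
            lintegral_indicator_const (measurableSet_lt_set (M x)),
            Measure.restrict_apply (measurableSet_lt_set (M x))]
          have e2 : {t' : ℝ | ENNReal.ofReal t' < M x} ∩ Set.Ioi 0
              = {t ∈ Set.Ioi (0:ℝ) | ENNReal.ofReal t < M x} := by
            ext t; simp [and_comm]
          rw [e2, volume_lt_set _ (hMtop x), one_mul]
  have hgM : (∫⁻ x, g x * M x) = ∫⁻ x, Set.indicator P₀.toSet g x * M x := by
    refine lintegral_congr fun x => ?_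
    by_cases hx : x ∈ P₀.toSet
    · rw [Set.indicator_of_mem hx]
    · simp [Set.indicator_of_notMem hx, hM0 x hx]
  have stepF : (∫⁻ x, Set.indicator P₀.toSet g x * M x)
      ≤ G ^ (1/2:ℝ) * (∫⁻ x, M x ^ 2) ^ (1/2:ℝ) := by
    have H := lintegral_mul_le_sq volume (hg.indicator (meas_toSet P₀)) hMmeas
    refine H.trans (le_of_eq ?_)
    congr 1
    congr 1
    have e2 : ∀ x, Set.indicator P₀.toSet g x ^ 2
        = Set.indicator P₀.toSet (fun x => g x ^ 2) x := by
      intro x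
      by_cases hx : x ∈ P₀.toSet <;>
        simp [Set.indicator_of_mem, Set.indicator_of_notMem, hx]
    rw [lintegral_congr e2, lintegral_indicator (meas_toSet P₀)]
  have hTtop : (∫⁻ x, M x ^ 2) ≠ ⊤ := by
    have hb : ∀ x, M x ^ 2 ≤ C ^ 2 * Set.indicator P₀.toSet 1 x := by
      intro x
      by_cases hx : x ∈ P₀.toSet
      · rw [Set.indicator_of_mem hx, Pi.one_apply, mul_one]
        exact pow_le_pow_left₀ (zero_le) (hMleC x) 2
      · rw [hM0 x hx]; simp
    refine ne_top_of_le_ne_top ?_ (lintegral_mono hb)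
    rw [lintegral_const_mul _ (measurable_one.indicator (meas_toSet P₀)),
      lintegral_indicator (meas_toSet P₀)]
    simp only [Pi.one_apply]
    rw [setLIntegral_one]
    exact (ENNReal.mul_lt_top (ENNReal.pow_lt_top hCtop.lt_top)
      (vol_ne_top P₀).lt_top).ne
  -- conclude
  have hT2 : (∫⁻ x, M x ^ 2) ≤ 2 * (G ^ (1/2:ℝ) * (∫⁻ x, M x ^ 2) ^ (1/2:ℝ)) := by
    calc (∫⁻ x, M x ^ 2)
        = 2 * ∫⁻ t in Set.Ioi (0:ℝ),
            ENNReal.ofReal t * volume {x | ENNReal.ofReal t < M x} := stepD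
      _ ≤ 2 * ∫⁻ x, g x * M x := stepE
      _ = 2 * ∫⁻ x, Set.indicator P₀.toSet g x * M x := by rw [hgM]
      _ ≤ 2 * (G ^ (1/2:ℝ) * (∫⁻ x, M x ^ 2) ^ (1/2:ℝ)) := mul_le_mul_right stepF 2
  calc ∑' Q : {Q : DyadicCube d // Q.In P₀ ∧ Q.gen ≤ P₀.gen + (N:ℤ)},
      α Q.1 * (Q.1.avg g) ^ 2 * Q.1.vol
      ≤ A * (2 * ∫⁻ t in Set.Ioi (0:ℝ),
          ENNReal.ofReal t * volume {x | ENNReal.ofReal t < M x}) := stepC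
    _ = A * ∫⁻ x, M x ^ 2 := by rw [← stepD]
    _ ≤ A * (4 * G) := mul_le_mul_right (le_four_of_le_sqrt hTtop hG hT2) A
    _ = 4 * A * G := by ring

end CarlE

open CarlE

/-- linear dyadic Carleson embedding:
`Σ_{Q ∈ 𝒟(P₀)} α_Q ⟨g⟩_Q² |Q| ≤ 4‖α‖ ‖g‖²_{L²(P₀)}`. -/
theorem linear_carleson_embedding {d : ℕ} (P₀ : DyadicCube d)
    (α : DyadicCube d → ℝ≥0∞) (A : ℝ≥0∞) (hα : Carleson P₀ α A)
    (g : (Fin d → ℝ) → ℝ≥0∞) (hg : Measurable g) :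
    ∑' Q : {Q : DyadicCube d // Q.In P₀},
        α Q.1 * ((Q : DyadicCube d).avg g) ^ 2 * (Q : DyadicCube d).vol ≤
      4 * A * ∫⁻ x in P₀.toSet, (g x) ^ 2 := by
  by_cases hGtop : (∫⁻ x in P₀.toSet, (g x) ^ 2) = ⊤
  · by_cases hA : A = 0
    · have hzero : ∀ Q : {Q : DyadicCube d // Q.In P₀},
          α Q.1 * ((Q : DyadicCube d).avg g) ^ 2 * (Q : DyadicCube d).vol = 0 := by
        intro Q
        have h1 : α Q.1 * Q.1.vol ≤ A * Q.1.vol :=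
          le_trans (ENNReal.le_tsum (⟨Q.1, In_refl Q.1⟩ : {R : DyadicCube d // R.In Q.1}))
            (hα Q.1 Q.2)
        rw [hA, zero_mul] at h1
        have h2 : α Q.1 * Q.1.vol = 0 := le_antisymm h1 (zero_le)
        rcases mul_eq_zero.mp h2 with h | h
        · rw [h, zero_mul, zero_mul]
        · exact absurd h (vol_ne_zero Q.1)
      rw [ENNReal.tsum_eq_zero.mpr hzero]
      exact zero_le
    · have h4 : 4 * A * (∫⁻ x in P₀.toSet, (g x) ^ 2) = ⊤ := by
        rw [hGtop, ENNReal.mul_top (mul_ne_zero (by norm_num) hA)]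
      rw [h4]
      exact le_top
  · rw [ENNReal.tsum_eq_iSup_sum]
    refine iSup_le fun F => ?_
    set N := F.sup (fun Q => (Q.1.gen - P₀.gen).toNat) with hN
    have hkey : ∀ Q ∈ F, Q.1.gen ≤ P₀.gen + (N:ℤ) := by
      intro Q hQ
      have h1 : (Q.1.gen - P₀.gen).toNat ≤ N :=
        Finset.le_sup (f := fun Q : {Q : DyadicCube d // Q.In P₀} =>
          (Q.1.gen - P₀.gen).toNat) hQ
      have h2 : P₀.gen ≤ Q.1.gen := Q.2.1
      omega
    have h1 : ∑ Q ∈ F, α Q.1 * ((Q : DyadicCube d).avg g) ^ 2 * (Q : DyadicCube d).vol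
        = ∑' Q : {Q : {Q : DyadicCube d // Q.In P₀} // Q ∈ F},
            α Q.1.1 * (Q.1.1.avg g) ^ 2 * Q.1.1.vol :=
      (F.tsum_subtype (fun Q => α Q.1 * (Q.1.avg g) ^ 2 * Q.1.vol)).symm
    rw [h1]
    refine le_trans (ENNReal.summable.tsum_le_tsum_of_inj
      (g := fun Q : {Q : DyadicCube d // Q.In P₀ ∧ Q.gen ≤ P₀.gen + (N:ℤ)} =>
        α Q.1 * (Q.1.avg g) ^ 2 * Q.1.vol)
      (fun Q : {Q : {Q : DyadicCube d // Q.In P₀} // Q ∈ F} =>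
        (⟨Q.1.1, Q.1.2, hkey Q.1 Q.2⟩ :
          {Q : DyadicCube d // Q.In P₀ ∧ Q.gen ≤ P₀.gen + (N:ℤ)}))
      (fun a b hab => ?_) (fun c _ => zero_le) (fun Q => le_rfl)
      ENNReal.summable) ?_
    · have h2 : a.1.1 = b.1.1 := congrArg (fun z => z.1) hab
      exact Subtype.ext (Subtype.ext h2)
    · exact truncated_bound hα hg hGtop N
end
end

section
/- Weak-type (1,…,1) → L^{1/k,∞} bound for multilinear positive dyadic shifts with constant independent of complexity: there is a constant C_W depending only on k and d (one may take C_W = 2^{k(5+d(2k−1))}) such that for every dyadic cube P₀, every Carleson sequence α with ‖α‖ = 1, every m ≥ 0, and all nonnegative f_i ∈ L¹(P₀), one has sup_{λ>0} λ |{x ∈ P₀ : 𝒜^m_{P₀,α}(f₁,…,f_k)(x) > λ}|^k ≤ C_W ∏_{i=1}^k ‖f_i‖_{L¹(P₀)}. -/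
open MeasureTheory ENNReal Set
noncomputable section

open DyadicCube

namespace DSP
variable {d : ℕ}

instance : Countable (DyadicCube d) := by
  have h : Function.Injective (fun Q : DyadicCube d => (Q.gen, Q.pos)) := by
    intro Q R hQR
    cases Q; cases R
    simpa using hQR
  exact h.countable

instance : MeasurableSpace (DyadicCube d) := ⊤

instance : MeasurableSingletonClass (DyadicCube d) := ⟨fun _ => trivial⟩

lemma toSet_eq_pi (Q : DyadicCube d) :
    Q.toSet = Set.pi Set.univ (fun i => Set.Ico ((Q.pos i : ℝ) * (2:ℝ)^(-Q.gen))
      (((Q.pos i : ℝ) + 1) * (2:ℝ)^(-Q.gen))) := by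
  ext x; simp [DyadicCube.toSet, Set.mem_pi, Set.mem_Ico]

lemma measurableSet_toSet (Q : DyadicCube d) : MeasurableSet Q.toSet := by
  rw [toSet_eq_pi]; exact MeasurableSet.univ_pi (fun i => measurableSet_Ico)

lemma toSet_nonempty (Q : DyadicCube d) : Q.toSet.Nonempty := by
  refine ⟨fun i => (Q.pos i : ℝ) * (2:ℝ)^(-Q.gen), fun i => ⟨le_rfl, ?_⟩⟩
  have h2 : (0:ℝ) < (2:ℝ)^(-Q.gen) := zpow_pos (by norm_num) _
  exact mul_lt_mul_of_pos_right (lt_add_one _) h2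

lemma vol_eq (Q : DyadicCube d) : Q.vol = (ENNReal.ofReal ((2:ℝ)^(-Q.gen)))^d := by
  rw [DyadicCube.vol, toSet_eq_pi, volume_pi_pi]
  have h : ∀ i : Fin d, volume (Set.Ico ((Q.pos i : ℝ) * (2:ℝ)^(-Q.gen))
      (((Q.pos i : ℝ) + 1) * (2:ℝ)^(-Q.gen))) = ENNReal.ofReal ((2:ℝ)^(-Q.gen)) := by
    intro i
    rw [Real.volume_Ico]
    congr 1
    ring
  simp only [h, Finset.prod_const, Finset.card_univ, Fintype.card_fin]

lemma vol_pos (Q : DyadicCube d) : 0 < Q.vol := by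
  rw [vol_eq]
  have : (0:ℝ) < (2:ℝ)^(-Q.gen) := zpow_pos (by norm_num) _
  positivity

lemma vol_ne_zero (Q : DyadicCube d) : Q.vol ≠ 0 := (vol_pos Q).ne'

lemma vol_ne_top (Q : DyadicCube d) : Q.vol ≠ ∞ := by
  rw [vol_eq]
  exact ENNReal.pow_ne_top ENNReal.ofReal_ne_top

lemma parent_gen (Q : DyadicCube d) : Q.parent.gen = Q.gen - 1 := rfl

lemma two_zpow_neg_sub (g : ℤ) : (2:ℝ)^(-(g-1)) = 2 * (2:ℝ)^(-g) := by
  have : -(g-1) = 1 + (-g) := by ring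
  rw [this, zpow_add₀ (by norm_num : (2:ℝ) ≠ 0)]
  norm_num

lemma subset_parent (Q : DyadicCube d) : Q.toSet ⊆ Q.parent.toSet := by
  intro x hx i
  have h := hx i
  have h2 : (0:ℝ) < (2:ℝ)^(-Q.gen) := zpow_pos (by norm_num) _
  have h1 : 2 * ((Q.pos i).fdiv 2) ≤ Q.pos i ∧ Q.pos i < 2 * ((Q.pos i).fdiv 2) + 2 := by
    rw [Int.fdiv_eq_ediv_of_nonneg _ (by norm_num)]
    omega
  have hc : (2:ℝ)^(-(Q.parent.gen)) = 2 * (2:ℝ)^(-Q.gen) := by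
    rw [parent_gen]; exact two_zpow_neg_sub Q.gen
  show ((Q.parent.pos i : ℝ)) * (2:ℝ)^(-Q.parent.gen) ≤ x i ∧
      x i < ((Q.parent.pos i : ℝ) + 1) * (2:ℝ)^(-Q.parent.gen)
  have hp : (Q.parent.pos i : ℝ) = ((Q.pos i).fdiv 2 : ℝ) := rfl
  rw [hc, hp]
  have c1 : ((2 * ((Q.pos i).fdiv 2) : ℤ) : ℝ) ≤ ((Q.pos i : ℤ) : ℝ) := by exact_mod_cast h1.1
  have h1' : Q.pos i + 1 ≤ 2 * ((Q.pos i).fdiv 2) + 2 := by omega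
  have c2 : ((Q.pos i : ℤ) : ℝ) + 1 ≤ 2 * (((Q.pos i).fdiv 2 : ℤ) : ℝ) + 2 := by exact_mod_cast h1'
  push_cast at c1 c2
  constructor
  · have k1 : ((2:ℝ) * ((Q.pos i).fdiv 2 : ℝ)) * (2:ℝ)^(-Q.gen) ≤ (Q.pos i : ℝ) * (2:ℝ)^(-Q.gen) :=
      mul_le_mul_of_nonneg_right (by linarith) h2.le
    calc ((Q.pos i).fdiv 2 : ℝ) * (2 * (2:ℝ)^(-Q.gen))
        = ((2:ℝ) * ((Q.pos i).fdiv 2 : ℝ)) * (2:ℝ)^(-Q.gen) := by ring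
      _ ≤ (Q.pos i : ℝ) * (2:ℝ)^(-Q.gen) := k1
      _ ≤ x i := h.1
  · have k2 : ((Q.pos i : ℝ) + 1) * (2:ℝ)^(-Q.gen) ≤ ((2:ℝ) * ((Q.pos i).fdiv 2 : ℝ) + 2) * (2:ℝ)^(-Q.gen) :=
      mul_le_mul_of_nonneg_right (by linarith) h2.le
    calc x i < ((Q.pos i : ℝ) + 1) * (2:ℝ)^(-Q.gen) := h.2
      _ ≤ ((2:ℝ) * ((Q.pos i).fdiv 2 : ℝ) + 2) * (2:ℝ)^(-Q.gen) := k2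
      _ = (((Q.pos i).fdiv 2 : ℝ) + 1) * (2 * (2:ℝ)^(-Q.gen)) := by ring

lemma ancestor_zero (Q : DyadicCube d) : ancestor 0 Q = Q := rfl

lemma ancestor_succ (m : ℕ) (Q : DyadicCube d) :
    ancestor (m+1) Q = (ancestor m Q).parent := Function.iterate_succ_apply' _ _ _

lemma ancestor_gen (m : ℕ) (Q : DyadicCube d) : (ancestor m Q).gen = Q.gen - m := by
  induction m with
  | zero => simp [ancestor_zero]
  | succ n ih => rw [ancestor_succ, parent_gen, ih]; push_cast; ring

lemma subset_ancestor (m : ℕ) (Q : DyadicCube d) : Q.toSet ⊆ (ancestor m Q).toSet := by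
  induction m with
  | zero => rw [ancestor_zero]
  | succ n ih => rw [ancestor_succ]; exact ih.trans (subset_parent _)

lemma interval_subset {p q g g' : ℤ} (hg : g ≤ g') {x : ℝ}
    (h1 : (p:ℝ) * (2:ℝ)^(-g) ≤ x) (h2 : x < ((p:ℝ)+1) * (2:ℝ)^(-g))
    (h3 : (q:ℝ) * (2:ℝ)^(-g') ≤ x) (h4 : x < ((q:ℝ)+1) * (2:ℝ)^(-g')) :
    (p:ℝ) * (2:ℝ)^(-g) ≤ (q:ℝ) * (2:ℝ)^(-g') ∧
      ((q:ℝ)+1) * (2:ℝ)^(-g') ≤ ((p:ℝ)+1) * (2:ℝ)^(-g) := by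
  set n : ℕ := (g' - g).toNat with hn_def
  have hn : (n:ℤ) = g' - g := Int.toNat_of_nonneg (by omega)
  have hcpos : (0:ℝ) < (2:ℝ)^(-g') := zpow_pos (by norm_num) _
  have hc : (2:ℝ)^(-g) = ((2^n : ℤ) : ℝ) * (2:ℝ)^(-g') := by
    push_cast
    rw [← zpow_natCast (2:ℝ) n, ← zpow_add₀ (by norm_num : (2:ℝ) ≠ 0)]
    congr 1
    omega
  have e1 : (p * 2^n : ℤ) ≤ q := by
    have hr : ((p * 2^n : ℤ) : ℝ) * (2:ℝ)^(-g') < ((q:ℝ)+1) * (2:ℝ)^(-g') := by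
      calc ((p * 2^n : ℤ) : ℝ) * (2:ℝ)^(-g') = (p:ℝ) * (((2^n : ℤ):ℝ) * (2:ℝ)^(-g')) := by
            push_cast; ring
        _ = (p:ℝ) * (2:ℝ)^(-g) := by rw [← hc]
        _ ≤ x := h1
        _ < _ := h4
    have := (mul_lt_mul_iff_of_pos_right hcpos).mp hr
    have : ((p * 2^n : ℤ) : ℝ) < ((q + 1 : ℤ) : ℝ) := by push_cast; push_cast at this; linarith
    exact_mod_cast Int.lt_add_one_iff.mp (by exact_mod_cast this)
  have e2 : q + 1 ≤ (p+1) * 2^n := by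
    have hr : (q:ℝ) * (2:ℝ)^(-g') < (((p+1) * 2^n : ℤ) : ℝ) * (2:ℝ)^(-g') := by
      calc (q:ℝ) * (2:ℝ)^(-g') ≤ x := h3
        _ < ((p:ℝ)+1) * (2:ℝ)^(-g) := h2
        _ = (((p+1) * 2^n : ℤ) : ℝ) * (2:ℝ)^(-g') := by rw [hc]; push_cast; ring
    have := (mul_lt_mul_iff_of_pos_right hcpos).mp hr
    have h' : (q : ℝ) < (((p+1) * 2^n : ℤ) : ℝ) := this
    have h'' : q < (p+1) * 2^n := by exact_mod_cast h'
    omega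
  constructor
  · rw [hc]
    have : ((p * 2^n : ℤ) : ℝ) ≤ (q:ℝ) := by exact_mod_cast e1
    push_cast at this ⊢
    nlinarith [hcpos.le]
  · rw [hc]
    have : ((q + 1 : ℤ) : ℝ) ≤ (((p+1) * 2^n : ℤ) : ℝ) := by exact_mod_cast e2
    push_cast at this ⊢
    nlinarith [hcpos.le]

lemma toSet_subset_of_inter {Q R : DyadicCube d} (h : (Q.toSet ∩ R.toSet).Nonempty)
    (hg : R.gen ≤ Q.gen) : Q.toSet ⊆ R.toSet := by
  obtain ⟨x, hxQ, hxR⟩ := h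
  intro y hy i
  have hc := interval_subset hg (hxR i).1 (hxR i).2 (hxQ i).1 (hxQ i).2
  exact ⟨hc.1.trans (hy i).1, lt_of_lt_of_le (hy i).2 hc.2⟩

lemma In_of_inter {Q R : DyadicCube d} (h : (Q.toSet ∩ R.toSet).Nonempty)
    (hg : R.gen ≤ Q.gen) : Q.In R := ⟨hg, toSet_subset_of_inter h hg⟩

lemma eq_of_gen_eq {Q R : DyadicCube d} (h : (Q.toSet ∩ R.toSet).Nonempty)
    (hg : Q.gen = R.gen) : Q = R := by
  obtain ⟨x, hxQ, hxR⟩ := h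
  have hcpos : (0:ℝ) < (2:ℝ)^(-Q.gen) := zpow_pos (by norm_num) _
  obtain ⟨gQ, pQ⟩ := Q
  obtain ⟨gR, pR⟩ := R
  simp only [DyadicCube.mk.injEq]
  simp only at hg
  subst hg
  refine ⟨rfl, funext fun i => ?_⟩
  have h1 := interval_subset le_rfl (hxQ i).1 (hxQ i).2 (hxR i).1 (hxR i).2
  have h2 := interval_subset le_rfl (hxR i).1 (hxR i).2 (hxQ i).1 (hxQ i).2
  have : (pQ i : ℝ) = (pR i : ℝ) := by
    have a1 := h1.1
    have a2 := h2.1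
    nlinarith [hcpos]
  exact_mod_cast this

lemma eq_ancestor_of_in {Q R : DyadicCube d} (h : Q.In R) :
    R = ancestor (Q.gen - R.gen).toNat Q := by
  have hg1 : R.gen ≤ Q.gen := h.1
  have hgen : (ancestor (Q.gen - R.gen).toNat Q).gen = R.gen := by
    rw [ancestor_gen]
    omega
  obtain ⟨x, hx⟩ := toSet_nonempty Q
  have hx1 : x ∈ R.toSet := h.2 hx
  have hx2 : x ∈ (ancestor (Q.gen - R.gen).toNat Q).toSet := subset_ancestor _ Q hx
  exact (eq_of_gen_eq ⟨x, hx2, hx1⟩ hgen).symm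

def maxCubes (φ : DyadicCube d → Prop) : Set (DyadicCube d) :=
  {M | φ M ∧ ∀ R, φ R → M.In R → R = M}

lemma exists_max {φ : DyadicCube d → Prop} {P₀ : DyadicCube d} (hφ : ∀ Q, φ Q → Q.In P₀)
    {Q : DyadicCube d} (hQ : φ Q) : ∃ M ∈ maxCubes φ, Q.In M := by
  classical
  set b : ℕ := (Q.gen - P₀.gen).toNat with hb
  set ψ : ℕ → Prop := fun n => φ (ancestor n Q) with hψ
  have hψ0 : ψ 0 := by rw [hψ]; simpa [ancestor_zero] using hQ
  set N := Nat.findGreatest ψ b with hN_def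
  have hN : ψ N := Nat.findGreatest_spec (Nat.zero_le b) hψ0
  have hNb : N ≤ b := Nat.findGreatest_le b
  refine ⟨ancestor N Q, ⟨hN, ?_⟩, ?_, subset_ancestor N Q⟩
  · intro R hR hMR
    have hQgen : P₀.gen ≤ Q.gen := (hφ Q hQ).1
    have hRgen : P₀.gen ≤ R.gen := (hφ R hR).1
    have hRgen2 : R.gen ≤ (ancestor N Q).gen := hMR.1
    rw [ancestor_gen] at hRgen2
    have hQR : Q.In R := ⟨by omega, (subset_ancestor N Q).trans hMR.2⟩
    have hR' := eq_ancestor_of_in hQR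
    set j := (Q.gen - R.gen).toNat with hj
    have hjb : j ≤ b := by omega
    have hψj : ψ j := by show φ (ancestor j Q); rw [← hR']; exact hR
    have hjN : j ≤ N := Nat.le_findGreatest hjb hψj
    have hjeq : j = N := by omega
    rw [hjeq] at hR'
    exact hR'
  · rw [ancestor_gen]; omega

lemma maxCubes_pairwise {φ : DyadicCube d → Prop} :
    (maxCubes φ).Pairwise fun M M' => Disjoint M.toSet M'.toSet := by
  intro M hM M' hM' hne
  by_contra hcon
  have h : (M.toSet ∩ M'.toSet).Nonempty := Set.not_disjoint_iff_nonempty_inter.mp hcon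
  rcases le_total M.gen M'.gen with h1 | h1
  · exact hne (hM'.2 M hM.1 (In_of_inter (by rwa [Set.inter_comm]) h1))
  · exact hne ((hM.2 M' hM'.1 (In_of_inter h h1)).symm)

end DSP

namespace DSP2
open DSP

variable {d : ℕ}

lemma vol_parent (Q : DyadicCube d) : Q.parent.vol = 2^d * Q.vol := by
  rw [vol_eq, vol_eq, parent_gen, two_zpow_neg_sub,
    ENNReal.ofReal_mul (by norm_num : (0:ℝ) ≤ 2), mul_pow]
  congr 1
  norm_num

lemma avg_le_parent (Q : DyadicCube d) (h : (Fin d → ℝ) → ℝ≥0∞) :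
    Q.avg h ≤ 2^d * Q.parent.avg h := by
  rw [DyadicCube.avg, DyadicCube.avg, vol_parent]
  have hint : ∫⁻ x in Q.toSet, h x ≤ ∫⁻ x in Q.parent.toSet, h x :=
    lintegral_mono_set (subset_parent Q)
  calc (∫⁻ x in Q.toSet, h x) / Q.vol
      ≤ (∫⁻ x in Q.parent.toSet, h x) / Q.vol := ENNReal.div_le_div_right hint _
    _ = (2^d * ∫⁻ x in Q.parent.toSet, h x) / (2^d * Q.vol) := by
        rw [ENNReal.mul_div_mul_left _ _ (by positivity) (by simp)]
    _ = 2^d * ((∫⁻ x in Q.parent.toSet, h x) / (2^d * Q.vol)) := by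
        rw [mul_div_assoc]

lemma prod_rpow {k : ℕ} (a : Fin k → ℝ≥0∞) {r : ℝ} (hr : 0 ≤ r) :
    (∏ i, a i) ^ r = ∏ i, (a i) ^ r := by
  classical
  induction (Finset.univ : Finset (Fin k)) using Finset.induction_on with
  | empty => simp [ENNReal.one_rpow]
  | insert _ _ hx ih => rw [Finset.prod_insert hx, Finset.prod_insert hx,
      ENNReal.mul_rpow_of_nonneg _ _ hr, ih]

/-- The (localized) multilinear dyadic maximal function. -/
def Mfn (P₀ : DyadicCube d) {k : ℕ} (h : Fin k → (Fin d → ℝ) → ℝ≥0∞) (x : Fin d → ℝ) : ℝ≥0∞ :=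
  ⨆ R : {R : DyadicCube d // R.In P₀},
    (R : DyadicCube d).toSet.indicator (fun _ => ∏ i, (R : DyadicCube d).avg (h i)) x

/-- The dyadic maximal density function of a set `G`. -/
def Dfn (P₀ : DyadicCube d) (G : Set (Fin d → ℝ)) (x : Fin d → ℝ) : ℝ≥0∞ :=
  ⨆ R : {R : DyadicCube d // R.In P₀},
    (R : DyadicCube d).toSet.indicator
      (fun _ => volume ((R : DyadicCube d).toSet ∩ G) / (R : DyadicCube d).vol) x

lemma measurable_Mfn (P₀ : DyadicCube d) {k : ℕ} (h : Fin k → (Fin d → ℝ) → ℝ≥0∞) :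
    Measurable (Mfn P₀ h) :=
  Measurable.iSup fun R => (measurable_const.indicator (measurableSet_toSet _))

lemma measurable_Dfn (P₀ : DyadicCube d) (G : Set (Fin d → ℝ)) :
    Measurable (Dfn P₀ G) :=
  Measurable.iSup fun R => (measurable_const.indicator (measurableSet_toSet _))

lemma le_Mfn {P₀ R : DyadicCube d} {k : ℕ} {h : Fin k → (Fin d → ℝ) → ℝ≥0∞}
    (hR : R.In P₀) {x : Fin d → ℝ} (hx : x ∈ R.toSet) :
    (∏ i, R.avg (h i)) ≤ Mfn P₀ h x := by
  refine le_iSup_of_le ⟨R, hR⟩ ?_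
  rw [Set.indicator_of_mem hx]

lemma le_Dfn {P₀ R : DyadicCube d} {G : Set (Fin d → ℝ)}
    (hR : R.In P₀) {x : Fin d → ℝ} (hx : x ∈ R.toSet) :
    volume (R.toSet ∩ G) / R.vol ≤ Dfn P₀ G x := by
  refine le_iSup_of_le ⟨R, hR⟩ ?_
  rw [Set.indicator_of_mem hx]

lemma Mfn_le {P₀ : DyadicCube d} {k : ℕ} {h : Fin k → (Fin d → ℝ) → ℝ≥0∞} {c : ℝ≥0∞}
    (hb : ∀ R : DyadicCube d, R.In P₀ → (∏ i, R.avg (h i)) ≤ c) (x : Fin d → ℝ) :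
    Mfn P₀ h x ≤ c := by
  refine iSup_le fun R => ?_
  by_cases hx : x ∈ (R : DyadicCube d).toSet
  · rw [Set.indicator_of_mem hx]; exact hb R R.2
  · rw [Set.indicator_of_notMem hx]; exact zero_le

lemma Dfn_le_one {P₀ : DyadicCube d} {G : Set (Fin d → ℝ)} (x : Fin d → ℝ) :
    Dfn P₀ G x ≤ 1 := by
  refine iSup_le fun R => ?_
  by_cases hx : x ∈ (R : DyadicCube d).toSet
  · rw [Set.indicator_of_mem hx]
    exact ENNReal.div_le_of_le_mul (by rw [one_mul]; exact measure_mono Set.inter_subset_left)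
  · rw [Set.indicator_of_notMem hx]; exact zero_le

lemma exists_of_lt_Mfn {P₀ : DyadicCube d} {k : ℕ} {h : Fin k → (Fin d → ℝ) → ℝ≥0∞}
    {x : Fin d → ℝ} {t : ℝ≥0∞} (ht : t < Mfn P₀ h x) :
    ∃ R : DyadicCube d, R.In P₀ ∧ x ∈ R.toSet ∧ t < ∏ i, R.avg (h i) := by
  obtain ⟨R, hR⟩ := lt_iSup_iff.mp ht
  by_cases hx : x ∈ (R : DyadicCube d).toSet
  · rw [Set.indicator_of_mem hx] at hR
    exact ⟨R, R.2, hx, hR⟩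
  · rw [Set.indicator_of_notMem hx] at hR
    exact absurd hR (by simp)

lemma exists_of_lt_Dfn {P₀ : DyadicCube d} {G : Set (Fin d → ℝ)}
    {x : Fin d → ℝ} {t : ℝ≥0∞} (ht : t < Dfn P₀ G x) :
    ∃ R : DyadicCube d, R.In P₀ ∧ x ∈ R.toSet ∧ t < volume (R.toSet ∩ G) / R.vol := by
  obtain ⟨R, hR⟩ := lt_iSup_iff.mp ht
  by_cases hx : x ∈ (R : DyadicCube d).toSet
  · rw [Set.indicator_of_mem hx] at hR
    exact ⟨R, R.2, hx, hR⟩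
  · rw [Set.indicator_of_notMem hx] at hR
    exact absurd hR (by simp)

lemma pairwise_disjoint_subtype {S : Set (DyadicCube d)}
    (hS : S.Pairwise fun M M' => Disjoint M.toSet M'.toSet) :
    Pairwise (Function.onFun Disjoint fun M : S => (M : DyadicCube d).toSet) := by
  intro M M' hne
  exact hS M.2 M'.2 (fun hval => hne (Subtype.ext hval))

lemma tsum_lintegral_le {S : Set (DyadicCube d)}
    (hdisj : S.Pairwise fun M M' => Disjoint M.toSet M'.toSet)
    {A : Set (Fin d → ℝ)} (hsub : ∀ M ∈ S, M.toSet ⊆ A) (h : (Fin d → ℝ) → ℝ≥0∞) :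
    ∑' M : S, ∫⁻ x in (M : DyadicCube d).toSet, h x ≤ ∫⁻ x in A, h x := by
  rw [← lintegral_iUnion (fun M : S => measurableSet_toSet _) (pairwise_disjoint_subtype hdisj)]
  exact lintegral_mono_set (Set.iUnion_subset fun M => hsub M M.2)

/-- Hölder's inequality for sums, `k` factors with exponent `1/k`. -/
lemma tsum_prod_rpow_le {ι : Type*} [Countable ι] [MeasurableSpace ι]
    [MeasurableSingletonClass ι] {k : ℕ} (hk : 0 < k) (a : ι → Fin k → ℝ≥0∞) :
    ∑' j, ∏ i, (a j i) ^ (1/(k:ℝ)) ≤ ∏ i, (∑' j, a j i) ^ (1/(k:ℝ)) := by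
  have hp : ∑ _i : Fin k, (1/(k:ℝ)) = 1 := by
    rw [Finset.sum_const, Finset.card_univ, Fintype.card_fin, nsmul_eq_mul]
    field_simp
  have := ENNReal.lintegral_prod_norm_pow_le (μ := (Measure.count : Measure ι))
    (Finset.univ) (f := fun i j => a j i)
    (fun i _ => (measurable_of_countable _).aemeasurable)
    (p := fun _ => 1/(k:ℝ)) hp (fun i _ => by positivity)
  simpa [MeasureTheory.lintegral_count] using this

end DSP2

namespace DSP3
open DSP DSP2

variable {d : ℕ}

lemma prod_avg_eq {k : ℕ} (Q : DyadicCube d) (h : Fin k → (Fin d → ℝ) → ℝ≥0∞) :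
    (∏ i, Q.avg (h i)) = (∏ i, ∫⁻ x in Q.toSet, h i x) / Q.vol ^ k := by
  simp only [DyadicCube.avg, div_eq_mul_inv]
  rw [Finset.prod_mul_distrib, Finset.prod_const, Finset.card_univ, Fintype.card_fin,
    ← ENNReal.inv_pow]

lemma vol_le_of_lt_prod_avg {k : ℕ} (hk : 0 < k) {Q : DyadicCube d}
    {h : Fin k → (Fin d → ℝ) → ℝ≥0∞} {t : ℝ≥0∞} (ht : 0 < t) (ht' : t ≠ ∞)
    (hlt : t < ∏ i, Q.avg (h i)) :
    Q.vol ≤ ((∏ i, ∫⁻ x in Q.toSet, h i x) / t) ^ (1/(k:ℝ)) := by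
  rw [prod_avg_eq] at hlt
  have h1 : t * Q.vol ^ k < ∏ i, ∫⁻ x in Q.toSet, h i x := by
    rw [← ENNReal.lt_div_iff_mul_lt (Or.inl (pow_ne_zero _ (vol_ne_zero Q)))
      (Or.inl (ENNReal.pow_ne_top (vol_ne_top Q)))]
    exact hlt
  have h2 : Q.vol ^ k ≤ (∏ i, ∫⁻ x in Q.toSet, h i x) / t := by
    rw [ENNReal.le_div_iff_mul_le (Or.inl ht.ne') (Or.inl ht')]
    rw [mul_comm]
    exact h1.le
  calc Q.vol = (Q.vol ^ k) ^ (1/(k:ℝ)) := by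
        rw [← ENNReal.rpow_natCast Q.vol k, ← ENNReal.rpow_mul,
          mul_one_div_cancel (by exact_mod_cast hk.ne' : (k:ℝ) ≠ 0), ENNReal.rpow_one]
    _ ≤ _ := ENNReal.rpow_le_rpow h2 (by positivity)

lemma sum_max_vol_le {k : ℕ} (hk : 0 < k) (P₀ : DyadicCube d)
    (h : Fin k → (Fin d → ℝ) → ℝ≥0∞) {t : ℝ≥0∞} (ht : 0 < t) (ht' : t ≠ ∞) :
    ∑' M : ↥(maxCubes (fun Q => Q.In P₀ ∧ t < ∏ i, Q.avg (h i))), (M : DyadicCube d).vol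
      ≤ ((∏ i, ∫⁻ x in P₀.toSet, h i x) / t) ^ (1/(k:ℝ)) := by
  set S := maxCubes (fun Q : DyadicCube d => Q.In P₀ ∧ t < ∏ i, Q.avg (h i)) with hS
  have hdisj : S.Pairwise fun M M' => Disjoint M.toSet M'.toSet := maxCubes_pairwise
  have hIn : ∀ M ∈ S, M.toSet ⊆ P₀.toSet := fun M hM => hM.1.1.2
  have hrk : (0:ℝ) ≤ 1/(k:ℝ) := by positivity
  calc ∑' M : S, (M : DyadicCube d).vol
      ≤ ∑' M : S, ((∏ i, ∫⁻ x in (M : DyadicCube d).toSet, h i x) / t) ^ (1/(k:ℝ)) :=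
        ENNReal.tsum_le_tsum fun M => vol_le_of_lt_prod_avg hk ht ht' M.2.1.2
    _ = ∑' M : S, (∏ i, (∫⁻ x in (M : DyadicCube d).toSet, h i x) ^ (1/(k:ℝ))) * (t⁻¹) ^ (1/(k:ℝ)) := by
        congr 1; funext M
        rw [div_eq_mul_inv, ENNReal.mul_rpow_of_nonneg _ _ hrk, prod_rpow _ hrk]
    _ = (∑' M : S, ∏ i, (∫⁻ x in (M : DyadicCube d).toSet, h i x) ^ (1/(k:ℝ))) * (t⁻¹) ^ (1/(k:ℝ)) :=
        ENNReal.tsum_mul_right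
    _ ≤ (∏ i, (∑' M : S, ∫⁻ x in (M : DyadicCube d).toSet, h i x) ^ (1/(k:ℝ))) * (t⁻¹) ^ (1/(k:ℝ)) :=
        mul_le_mul_left (tsum_prod_rpow_le hk _) _
    _ ≤ (∏ i, (∫⁻ x in P₀.toSet, h i x) ^ (1/(k:ℝ))) * (t⁻¹) ^ (1/(k:ℝ)) := by
        refine mul_le_mul_left (Finset.prod_le_prod' fun i _ => ?_) _
        exact ENNReal.rpow_le_rpow (tsum_lintegral_le hdisj hIn _) hrk
    _ = _ := by rw [← prod_rpow _ hrk, ← ENNReal.mul_rpow_of_nonneg _ _ hrk, ← div_eq_mul_inv]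

lemma meas_Mfn_gt {k : ℕ} (hk : 0 < k) (P₀ : DyadicCube d)
    (h : Fin k → (Fin d → ℝ) → ℝ≥0∞) {t : ℝ≥0∞} (ht : 0 < t) (ht' : t ≠ ∞) :
    volume {x ∈ P₀.toSet | t < Mfn P₀ h x}
      ≤ ((∏ i, ∫⁻ x in P₀.toSet, h i x) / t) ^ (1/(k:ℝ)) := by
  set S := maxCubes (fun Q : DyadicCube d => Q.In P₀ ∧ t < ∏ i, Q.avg (h i)) with hS
  have cover : {x ∈ P₀.toSet | t < Mfn P₀ h x} ⊆ ⋃ M : S, (M : DyadicCube d).toSet := by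
    rintro x ⟨hxP, hxt⟩
    obtain ⟨R, hR1, hR2, hR3⟩ := exists_of_lt_Mfn hxt
    obtain ⟨M, hM, hRM⟩ := exists_max (φ := fun Q : DyadicCube d => Q.In P₀ ∧ t < ∏ i, Q.avg (h i))
      (fun Q hQ => hQ.1) ⟨hR1, hR3⟩
    exact Set.mem_iUnion.mpr ⟨⟨M, hM⟩, hRM.2 hR2⟩
  calc volume {x ∈ P₀.toSet | t < Mfn P₀ h x}
      ≤ volume (⋃ M : S, (M : DyadicCube d).toSet) := measure_mono cover
    _ ≤ ∑' M : S, (M : DyadicCube d).vol := measure_iUnion_le _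
    _ ≤ _ := sum_max_vol_le hk P₀ h ht ht'

lemma meas_Dfn_gt (P₀ : DyadicCube d) {G : Set (Fin d → ℝ)} (hG : MeasurableSet G)
    {t : ℝ≥0∞} (ht : 0 < t) (ht' : t ≠ ∞) :
    volume {x ∈ P₀.toSet | t < Dfn P₀ G x} ≤ volume G / t := by
  set S := maxCubes (fun Q : DyadicCube d => Q.In P₀ ∧ t < volume (Q.toSet ∩ G) / Q.vol) with hS
  have hdisj : S.Pairwise fun M M' => Disjoint M.toSet M'.toSet := maxCubes_pairwise
  have cover : {x ∈ P₀.toSet | t < Dfn P₀ G x} ⊆ ⋃ M : S, (M : DyadicCube d).toSet := by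
    rintro x ⟨hxP, hxt⟩
    obtain ⟨R, hR1, hR2, hR3⟩ := exists_of_lt_Dfn hxt
    obtain ⟨M, hM, hRM⟩ := exists_max
      (φ := fun Q : DyadicCube d => Q.In P₀ ∧ t < volume (Q.toSet ∩ G) / Q.vol)
      (fun Q hQ => hQ.1) ⟨hR1, hR3⟩
    exact Set.mem_iUnion.mpr ⟨⟨M, hM⟩, hRM.2 hR2⟩
  have step1 : ∀ M : S, (M : DyadicCube d).vol ≤
      volume ((M : DyadicCube d).toSet ∩ G) / t := by
    intro M
    have h1 : t * (M : DyadicCube d).vol < volume ((M : DyadicCube d).toSet ∩ G) := by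
      rw [← ENNReal.lt_div_iff_mul_lt (Or.inl (vol_ne_zero _)) (Or.inl (vol_ne_top _))]
      exact M.2.1.2
    rw [ENNReal.le_div_iff_mul_le (Or.inl ht.ne') (Or.inl ht'), mul_comm]
    exact h1.le
  have step2 : ∑' M : S, volume ((M : DyadicCube d).toSet ∩ G) ≤ volume G := by
    rw [← measure_iUnion (fun M M' hne => ?_) (fun M => (measurableSet_toSet _).inter hG)]
    · exact measure_mono (Set.iUnion_subset fun M => Set.inter_subset_right)
    · exact Set.disjoint_of_subset Set.inter_subset_left Set.inter_subset_left
        (pairwise_disjoint_subtype hdisj hne)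
  calc volume {x ∈ P₀.toSet | t < Dfn P₀ G x}
      ≤ volume (⋃ M : S, (M : DyadicCube d).toSet) := measure_mono cover
    _ ≤ ∑' M : S, (M : DyadicCube d).vol := measure_iUnion_le _
    _ ≤ ∑' M : S, volume ((M : DyadicCube d).toSet ∩ G) / t := ENNReal.tsum_le_tsum step1
    _ = (∑' M : S, volume ((M : DyadicCube d).toSet ∩ G)) * t⁻¹ := by
        simp only [div_eq_mul_inv]; exact ENNReal.tsum_mul_right
    _ ≤ volume G * t⁻¹ := mul_le_mul_left step2 _
    _ = volume G / t := (div_eq_mul_inv _ _).symm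

/-- Scalar layer-cake identity. -/
lemma SC (c : ℝ≥0∞) :
    ∫⁻ s in Set.Ioi (0:ℝ), (Set.Ioi (0:ℝ) ∩ {s : ℝ | ENNReal.ofReal s < c}).indicator
      (1 : ℝ → ℝ≥0∞) s = c := by
  have hmeas : MeasurableSet {s : ℝ | ENNReal.ofReal s < c} :=
    measurableSet_lt (by fun_prop) measurable_const
  rw [lintegral_indicator_one (measurableSet_Ioi.inter hmeas),
    Measure.restrict_apply (measurableSet_Ioi.inter hmeas)]
  have hin : Set.Ioi (0:ℝ) ∩ {s : ℝ | ENNReal.ofReal s < c} ∩ Set.Ioi (0:ℝ)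
      = Set.Ioi (0:ℝ) ∩ {s : ℝ | ENNReal.ofReal s < c} := by
    rw [Set.inter_assoc, Set.inter_comm {s : ℝ | ENNReal.ofReal s < c}, ← Set.inter_assoc,
      Set.inter_self]
  rw [hin]
  rcases eq_or_ne c ∞ with rfl | hc
  · have h2 : Set.Ioi (0:ℝ) ∩ {s : ℝ | ENNReal.ofReal s < ∞} = Set.Ioi (0:ℝ) := by
      ext s; simp [ENNReal.ofReal_lt_top]
    rw [h2, Real.volume_Ioi]
  · have h2 : Set.Ioi (0:ℝ) ∩ {s : ℝ | ENNReal.ofReal s < c} = Set.Ioo 0 c.toReal := by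
      ext s
      simp only [Set.mem_inter_iff, Set.mem_Ioi, Set.mem_setOf_eq, Set.mem_Ioo]
      constructor
      · rintro ⟨h1, h2⟩
        exact ⟨h1, (ENNReal.ofReal_lt_iff_lt_toReal h1.le hc).mp h2⟩
      · rintro ⟨h1, h2⟩
        exact ⟨h1, (ENNReal.ofReal_lt_iff_lt_toReal h1.le hc).mpr h2⟩
    rw [h2, Real.volume_Ioo, sub_zero, ENNReal.ofReal_toReal hc]

/-- Layer-cake principle (exact form). -/
lemma LC {A : Set (Fin d → ℝ)} (hA : MeasurableSet A) {F : (Fin d → ℝ) → ℝ≥0∞}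
    (hF : Measurable F) :
    ∫⁻ x in A, F x = ∫⁻ t in Set.Ioi (0:ℝ), volume {x ∈ A | ENNReal.ofReal t < F x} := by
  have hmeas : MeasurableSet {p : (Fin d → ℝ) × ℝ | ENNReal.ofReal p.2 < F p.1} :=
    measurableSet_lt (by fun_prop) (hF.comp measurable_fst)
  have step1 : ∫⁻ x in A, F x = ∫⁻ x in A, ∫⁻ t in Set.Ioi (0:ℝ),
      (Set.Ioi (0:ℝ) ∩ {s : ℝ | ENNReal.ofReal s < F x}).indicator (1 : ℝ → ℝ≥0∞) t :=
    lintegral_congr fun x => (SC (F x)).symm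
  have step2 : ∫⁻ x in A, ∫⁻ t in Set.Ioi (0:ℝ),
      (Set.Ioi (0:ℝ) ∩ {s : ℝ | ENNReal.ofReal s < F x}).indicator (1 : ℝ → ℝ≥0∞) t
      = ∫⁻ t in Set.Ioi (0:ℝ), ∫⁻ x in A,
      (Set.Ioi (0:ℝ) ∩ {s : ℝ | ENNReal.ofReal s < F x}).indicator (1 : ℝ → ℝ≥0∞) t := by
    apply lintegral_lintegral_swap
    apply Measurable.aemeasurable
    have huncurry : (Function.uncurry fun (x : Fin d → ℝ) (t : ℝ) =>
        (Set.Ioi (0:ℝ) ∩ {s : ℝ | ENNReal.ofReal s < F x}).indicator (1 : ℝ → ℝ≥0∞) t) =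
        ({p : (Fin d → ℝ) × ℝ | p.2 ∈ Set.Ioi (0:ℝ)} ∩
          {p : (Fin d → ℝ) × ℝ | ENNReal.ofReal p.2 < F p.1}).indicator
          (1 : (Fin d → ℝ) × ℝ → ℝ≥0∞) := by
      funext p
      simp only [Function.uncurry]
      by_cases hp : p.2 ∈ Set.Ioi (0:ℝ) ∩ {s : ℝ | ENNReal.ofReal s < F p.1}
      · have h1 : p ∈ ({p : (Fin d → ℝ) × ℝ | p.2 ∈ Set.Ioi (0:ℝ)} ∩
            {p : (Fin d → ℝ) × ℝ | ENNReal.ofReal p.2 < F p.1}) := ⟨hp.1, hp.2⟩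
        rw [Set.indicator_of_mem hp, Set.indicator_of_mem h1]
        rfl
      · have h1 : p ∉ ({p : (Fin d → ℝ) × ℝ | p.2 ∈ Set.Ioi (0:ℝ)} ∩
            {p : (Fin d → ℝ) × ℝ | ENNReal.ofReal p.2 < F p.1}) :=
          fun hcon => hp ⟨hcon.1, hcon.2⟩
        rw [Set.indicator_of_notMem hp, Set.indicator_of_notMem h1]
    rw [huncurry]
    exact measurable_const.indicator ((measurable_snd measurableSet_Ioi).inter hmeas)
  have step3 : ∀ t ∈ Set.Ioi (0:ℝ), (∫⁻ x in A,
      (Set.Ioi (0:ℝ) ∩ {s : ℝ | ENNReal.ofReal s < F x}).indicator (1 : ℝ → ℝ≥0∞) t)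
      = volume {x ∈ A | ENNReal.ofReal t < F x} := by
    intro t ht
    have hmt : MeasurableSet {x : Fin d → ℝ | ENNReal.ofReal t < F x} :=
      measurableSet_lt measurable_const hF
    have hpt : ∀ x : Fin d → ℝ,
        (Set.Ioi (0:ℝ) ∩ {s : ℝ | ENNReal.ofReal s < F x}).indicator (1 : ℝ → ℝ≥0∞) t =
        ({x : Fin d → ℝ | ENNReal.ofReal t < F x}).indicator
          (1 : (Fin d → ℝ) → ℝ≥0∞) x := by
      intro x
      by_cases hx : ENNReal.ofReal t < F x
      · rw [Set.indicator_of_mem (Set.mem_inter ht hx),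
          Set.indicator_of_mem (show x ∈ {x : Fin d → ℝ | ENNReal.ofReal t < F x} from hx)]
        rfl
      · have h1 : t ∉ (Set.Ioi (0:ℝ) ∩ {s : ℝ | ENNReal.ofReal s < F x}) :=
          fun hcon => hx hcon.2
        rw [Set.indicator_of_notMem h1,
          Set.indicator_of_notMem (show x ∉ {x : Fin d → ℝ | ENNReal.ofReal t < F x} from hx)]
    calc (∫⁻ x in A,
        (Set.Ioi (0:ℝ) ∩ {s : ℝ | ENNReal.ofReal s < F x}).indicator (1 : ℝ → ℝ≥0∞) t)
        = ∫⁻ x in A, ({x : Fin d → ℝ | ENNReal.ofReal t < F x}).indicator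
            (1 : (Fin d → ℝ) → ℝ≥0∞) x := lintegral_congr fun x => hpt x
      _ = volume ({x : Fin d → ℝ | ENNReal.ofReal t < F x} ∩ A) := by
          rw [lintegral_indicator_one hmt, Measure.restrict_apply hmt]
      _ = volume {x ∈ A | ENNReal.ofReal t < F x} := by
          congr 1
          ext x
          simp only [Set.mem_inter_iff, Set.mem_setOf_eq, Set.mem_sep_iff]
          tauto
  rw [step1, step2]
  exact setLIntegral_congr_fun measurableSet_Ioi (fun t ht => step3 t ht)

end DSP3


namespace DSP4
open DSP DSP2 DSP3

variable {d : ℕ}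

/-- Carleson embedding with pointwise infima. -/
lemma CE {P₀ : DyadicCube d} {α : DyadicCube d → ℝ≥0∞} (hα : Carleson P₀ α 1)
    {J : DyadicCube d → Prop} (hJ : ∀ Q, J Q → Q.In P₀)
    {F : (Fin d → ℝ) → ℝ≥0∞} (hF : Measurable F) :
    ∑' Q : {Q : DyadicCube d // J Q}, α Q.1 * ((⨅ x ∈ Q.1.toSet, F x) * Q.1.vol)
      ≤ ∫⁻ x in P₀.toSet, F x := by
  classical
  set a : DyadicCube d → ℝ≥0∞ := fun Q => ⨅ x ∈ Q.toSet, F x with ha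
  -- layer-cake representation of each summand
  have hrep : ∀ Q : {Q : DyadicCube d // J Q}, α Q.1 * (a Q.1 * Q.1.vol) =
      ∫⁻ t in Set.Ioi (0:ℝ),
        (Set.Ioi (0:ℝ) ∩ {s : ℝ | ENNReal.ofReal s < a Q.1}).indicator
          (fun _ => α Q.1 * Q.1.vol) t := by
    intro Q
    have : (Set.Ioi (0:ℝ) ∩ {s : ℝ | ENNReal.ofReal s < a Q.1}).indicator
        (fun _ => α Q.1 * Q.1.vol) = fun t =>
        (α Q.1 * Q.1.vol) * (Set.Ioi (0:ℝ) ∩ {s : ℝ | ENNReal.ofReal s < a Q.1}).indicator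
          (1 : ℝ → ℝ≥0∞) t := by
      funext t
      by_cases hmem : t ∈ Set.Ioi (0:ℝ) ∩ {s : ℝ | ENNReal.ofReal s < a Q.1}
      · rw [Set.indicator_of_mem hmem, Set.indicator_of_mem hmem, Pi.one_apply, mul_one]
      · rw [Set.indicator_of_notMem hmem, Set.indicator_of_notMem hmem, mul_zero]
    simp only [this]
    rw [lintegral_const_mul _ (measurable_one.indicator
      (measurableSet_Ioi.inter
        (measurableSet_lt ENNReal.measurable_ofReal measurable_const))),
      SC (a Q.1)]
    ring
  -- pointwise-in-t bound on the sum by the measure of the superlevel set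
  have hptwise : ∀ t : ℝ, (∑' Q : {Q : DyadicCube d // J Q},
      (Set.Ioi (0:ℝ) ∩ {s : ℝ | ENNReal.ofReal s < a Q.1}).indicator
        (fun _ => α Q.1 * Q.1.vol) t)
      ≤ volume {x ∈ P₀.toSet | ENNReal.ofReal t < F x} := by
    intro t
    set φ : DyadicCube d → Prop := fun Q => J Q ∧ ENNReal.ofReal t < a Q with hφ
    set S := maxCubes φ with hSdef
    have hφIn : ∀ Q, φ Q → Q.In P₀ := fun Q hQ => hJ Q hQ.1
    have step1 : ∀ Q : {Q : DyadicCube d // J Q},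
        (Set.Ioi (0:ℝ) ∩ {s : ℝ | ENNReal.ofReal s < a Q.1}).indicator
          (fun _ => α Q.1 * Q.1.vol) t
        ≤ ∑' M : S, (if Q.1.In (M : DyadicCube d) then α Q.1 * Q.1.vol else 0) := by
      intro Q
      by_cases hmem : t ∈ Set.Ioi (0:ℝ) ∩ {s : ℝ | ENNReal.ofReal s < a Q.1}
      · rw [Set.indicator_of_mem hmem]
        obtain ⟨M, hM, hQM⟩ := exists_max (φ := φ) hφIn ⟨Q.2, hmem.2⟩
        refine le_trans ?_ (ENNReal.le_tsum (⟨M, hM⟩ : S))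
        rw [if_pos hQM]
      · rw [Set.indicator_of_notMem hmem]; exact zero_le
    have step2 : ∀ M : S, (∑' Q : {Q : DyadicCube d // J Q},
        (if Q.1.In (M : DyadicCube d) then α Q.1 * Q.1.vol else 0)) ≤
        (M : DyadicCube d).vol := by
      intro M
      have hM : (M : DyadicCube d).In P₀ := hφIn _ M.2.1
      have h1 : (∑' Q : {Q : DyadicCube d // J Q},
          (if Q.1.In (M : DyadicCube d) then α Q.1 * Q.1.vol else 0))
          = ∑' Q : DyadicCube d, {Q : DyadicCube d | J Q}.indicator
            (fun Q => if Q.In (M : DyadicCube d) then α Q * Q.vol else 0) Q :=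
        tsum_subtype {Q : DyadicCube d | J Q}
          (fun Q => if Q.In (M : DyadicCube d) then α Q * Q.vol else 0)
      have h2 : (∑' Q : {Q : DyadicCube d // Q.In (M : DyadicCube d)}, α Q.1 * Q.1.vol)
          = ∑' Q : DyadicCube d, {Q : DyadicCube d | Q.In (M : DyadicCube d)}.indicator
            (fun Q => α Q * Q.vol) Q :=
        tsum_subtype {Q : DyadicCube d | Q.In (M : DyadicCube d)} (fun Q => α Q * Q.vol)
      rw [h1]
      calc (∑' Q : DyadicCube d, {Q : DyadicCube d | J Q}.indicator
            (fun Q => if Q.In (M : DyadicCube d) then α Q * Q.vol else 0) Q)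
          ≤ ∑' Q : DyadicCube d, {Q : DyadicCube d | Q.In (M : DyadicCube d)}.indicator
            (fun Q => α Q * Q.vol) Q := by
            refine ENNReal.tsum_le_tsum fun Q => ?_
            by_cases hQJ : Q ∈ {Q : DyadicCube d | J Q}
            · rw [Set.indicator_of_mem hQJ]
              by_cases hQM : Q.In (M : DyadicCube d)
              · rw [if_pos hQM, Set.indicator_of_mem
                  (show Q ∈ {Q : DyadicCube d | Q.In (M : DyadicCube d)} from hQM)]
              · rw [if_neg hQM]; exact zero_le
            · rw [Set.indicator_of_notMem hQJ]; exact zero_le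
        _ = ∑' Q : {Q : DyadicCube d // Q.In (M : DyadicCube d)}, α Q.1 * Q.1.vol := h2.symm
        _ ≤ 1 * (M : DyadicCube d).vol := hα _ hM
        _ = (M : DyadicCube d).vol := one_mul _
    have step3 : ∑' M : S, (M : DyadicCube d).vol
        ≤ volume {x ∈ P₀.toSet | ENNReal.ofReal t < F x} := by
      have hdisj := (maxCubes_pairwise (φ := φ))
      show (∑' M : S, volume (M : DyadicCube d).toSet) ≤ _
      rw [← measure_iUnion (pairwise_disjoint_subtype hdisj)
        (fun M : S => measurableSet_toSet _)]
      refine measure_mono (Set.iUnion_subset fun M => ?_)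
      intro x hx
      refine ⟨(hφIn _ M.2.1).2 hx, lt_of_lt_of_le M.2.1.2 ?_⟩
      exact le_trans (iInf₂_le x hx) le_rfl
    calc (∑' Q : {Q : DyadicCube d // J Q},
        (Set.Ioi (0:ℝ) ∩ {s : ℝ | ENNReal.ofReal s < a Q.1}).indicator
          (fun _ => α Q.1 * Q.1.vol) t)
        ≤ ∑' Q : {Q : DyadicCube d // J Q}, ∑' M : S,
            (if Q.1.In (M : DyadicCube d) then α Q.1 * Q.1.vol else 0) :=
          ENNReal.tsum_le_tsum step1
      _ = ∑' M : S, ∑' Q : {Q : DyadicCube d // J Q},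
            (if Q.1.In (M : DyadicCube d) then α Q.1 * Q.1.vol else 0) := ENNReal.tsum_comm
      _ ≤ ∑' M : S, (M : DyadicCube d).vol := ENNReal.tsum_le_tsum step2
      _ ≤ _ := step3
  calc ∑' Q : {Q : DyadicCube d // J Q}, α Q.1 * ((⨅ x ∈ Q.1.toSet, F x) * Q.1.vol)
      = ∑' Q : {Q : DyadicCube d // J Q}, ∫⁻ t in Set.Ioi (0:ℝ),
          (Set.Ioi (0:ℝ) ∩ {s : ℝ | ENNReal.ofReal s < a Q.1}).indicator
            (fun _ => α Q.1 * Q.1.vol) t := tsum_congr fun Q => hrep Q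
    _ = ∫⁻ t in Set.Ioi (0:ℝ), ∑' Q : {Q : DyadicCube d // J Q},
          (Set.Ioi (0:ℝ) ∩ {s : ℝ | ENNReal.ofReal s < a Q.1}).indicator
            (fun _ => α Q.1 * Q.1.vol) t := by
        rw [lintegral_tsum]
        intro Q
        exact (measurable_const.indicator
          (measurableSet_Ioi.inter
            (measurableSet_lt ENNReal.measurable_ofReal measurable_const))).aemeasurable
    _ ≤ ∫⁻ t in Set.Ioi (0:ℝ), volume {x ∈ P₀.toSet | ENNReal.ofReal t < F x} :=
        lintegral_mono fun t => hptwise t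
    _ = ∫⁻ x in P₀.toSet, F x := (LC (measurableSet_toSet P₀) hF).symm

end DSP4

namespace DSP5
open DSP DSP2 DSP3 DSP4

variable {d k : ℕ}

/-- The stopping (CZ) cubes. -/
def Bfam (P₀ : DyadicCube d) (f : Fin k → (Fin d → ℝ) → ℝ≥0∞) (lam : ℝ≥0∞) :
    Set (DyadicCube d) :=
  maxCubes (fun Q => Q.In P₀ ∧ lam < ∏ i, Q.avg (f i))

/-- The exceptional set. -/
def bigO (P₀ : DyadicCube d) (f : Fin k → (Fin d → ℝ) → ℝ≥0∞) (lam : ℝ≥0∞) :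
    Set (Fin d → ℝ) :=
  ⋃ B : Bfam P₀ f lam, (B : DyadicCube d).toSet

/-- The CZ good function. -/
def gfun (P₀ : DyadicCube d) (f : Fin k → (Fin d → ℝ) → ℝ≥0∞) (lam : ℝ≥0∞) (i : Fin k) :
    (Fin d → ℝ) → ℝ≥0∞ := fun x =>
  (bigO P₀ f lam)ᶜ.indicator (f i) x +
    ∑' B : Bfam P₀ f lam, (B : DyadicCube d).toSet.indicator
      (fun _ => (B : DyadicCube d).avg (f i)) x

variable {P₀ : DyadicCube d} {f : Fin k → (Fin d → ℝ) → ℝ≥0∞} {lam : ℝ≥0∞}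

lemma measurableSet_bigO : MeasurableSet (bigO P₀ f lam) :=
  MeasurableSet.iUnion fun B => measurableSet_toSet _

lemma measurable_gfun (hf : ∀ i, Measurable (f i)) (i : Fin k) :
    Measurable (gfun P₀ f lam i) := by
  apply Measurable.add
  · exact (hf i).indicator measurableSet_bigO.compl
  · exact Measurable.ennreal_tsum fun B => measurable_const.indicator (measurableSet_toSet _)

lemma Bfam_disj : (Bfam P₀ f lam).Pairwise fun M M' => Disjoint M.toSet M'.toSet :=
  maxCubes_pairwise

lemma Bfam_In (B : DyadicCube d) (hB : B ∈ Bfam P₀ f lam) : B.In P₀ := hB.1.1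

lemma gfun_on_B {B : DyadicCube d} (hB : B ∈ Bfam P₀ f lam) {x : Fin d → ℝ}
    (hx : x ∈ B.toSet) (i : Fin k) : gfun P₀ f lam i x = B.avg (f i) := by
  have hxO : x ∈ bigO P₀ f lam := Set.mem_iUnion.mpr ⟨⟨B, hB⟩, hx⟩
  rw [gfun, Set.indicator_of_notMem (by simpa using hxO)]
  rw [zero_add]
  rw [tsum_eq_single (⟨B, hB⟩ : Bfam P₀ f lam)]
  · rw [Set.indicator_of_mem hx]
  · intro B' hne
    by_cases hmem : x ∈ (B' : DyadicCube d).toSet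
    · exfalso
      have hdis := Bfam_disj B'.2 hB (fun hval => hne (Subtype.ext hval))
      exact Set.disjoint_left.mp hdis hmem hx
    · exact Set.indicator_of_notMem hmem _

lemma lintegral_gfun_eq (hf : ∀ i, Measurable (f i)) {S : Set (Fin d → ℝ)}
    (hS : MeasurableSet S)
    (hB : ∀ B ∈ Bfam P₀ f lam, B.toSet ⊆ S ∨ Disjoint B.toSet S) (i : Fin k) :
    ∫⁻ x in S, gfun P₀ f lam i x = ∫⁻ x in S, f i x := by
  have hΩ : MeasurableSet (bigO P₀ f lam) := measurableSet_bigO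
  rw [show (fun x => gfun P₀ f lam i x) = fun x =>
    (bigO P₀ f lam)ᶜ.indicator (f i) x +
    ∑' B : Bfam P₀ f lam, (B : DyadicCube d).toSet.indicator
      (fun _ => (B : DyadicCube d).avg (f i)) x from rfl]
  rw [lintegral_add_left ((hf i).indicator hΩ.compl)]
  have h1 : ∫⁻ x in S, (bigO P₀ f lam)ᶜ.indicator (f i) x
      = ∫⁻ x in (bigO P₀ f lam)ᶜ ∩ S, f i x := by
    rw [lintegral_indicator hΩ.compl, Measure.restrict_restrict hΩ.compl]
  have h2 : ∫⁻ x in S, (∑' B : Bfam P₀ f lam, (B : DyadicCube d).toSet.indicator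
      (fun _ => (B : DyadicCube d).avg (f i)) x)
      = ∑' B : Bfam P₀ f lam, ∫⁻ x in (B : DyadicCube d).toSet ∩ S, f i x := by
    rw [lintegral_tsum (fun B => (measurable_const.indicator
      (measurableSet_toSet _)).aemeasurable)]
    congr 1
    funext B
    rw [lintegral_indicator (measurableSet_toSet _),
      Measure.restrict_restrict (measurableSet_toSet _)]
    rcases hB _ B.2 with hsub | hdis
    · have hBS : (B : DyadicCube d).toSet ∩ S = (B : DyadicCube d).toSet :=
        Set.inter_eq_left.mpr hsub
      rw [hBS, setLIntegral_const, DyadicCube.avg,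
        show volume (B : DyadicCube d).toSet = (B : DyadicCube d).vol from rfl,
        ENNReal.div_mul_cancel (vol_ne_zero _) (vol_ne_top _)]
    · have hBS : (B : DyadicCube d).toSet ∩ S = ∅ := Set.disjoint_iff_inter_eq_empty.mp hdis
      rw [hBS]
      simp
  rw [h1, h2]
  have h3 : ∑' B : Bfam P₀ f lam, ∫⁻ x in (B : DyadicCube d).toSet ∩ S, f i x
      = ∫⁻ x in (⋃ B : Bfam P₀ f lam, (B : DyadicCube d).toSet ∩ S), f i x := by
    rw [lintegral_iUnion (fun B => (measurableSet_toSet _).inter hS)]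
    intro B B' hne
    exact Set.disjoint_of_subset Set.inter_subset_left Set.inter_subset_left
      (pairwise_disjoint_subtype Bfam_disj hne)
  rw [h3]
  have h4 : (⋃ B : Bfam P₀ f lam, (B : DyadicCube d).toSet ∩ S) = bigO P₀ f lam ∩ S := by
    rw [bigO, Set.iUnion_inter]
  rw [h4, add_comm, ← Measure.restrict_restrict hΩ, ← Measure.restrict_restrict hΩ.compl]
  exact lintegral_add_compl (f i) hΩ

lemma lintegral_gfun_P₀ (hf : ∀ i, Measurable (f i)) (i : Fin k) :
    ∫⁻ x in P₀.toSet, gfun P₀ f lam i x = ∫⁻ x in P₀.toSet, f i x :=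
  lintegral_gfun_eq hf (measurableSet_toSet _)
    (fun B hB => Or.inl (Bfam_In B hB).2) i

lemma parent_In_of_Bfam (hP : (∏ i, P₀.avg (f i)) ≤ lam) {B : DyadicCube d}
    (hB : B ∈ Bfam P₀ f lam) :
    B.parent.In P₀ ∧ (∏ i, B.parent.avg (f i)) ≤ lam := by
  have hBP : B.In P₀ := hB.1.1
  have hBne : B ≠ P₀ := by
    rintro rfl
    exact absurd hB.1.2 (not_lt.mpr hP)
  have hgen : P₀.gen < B.gen := by
    rcases lt_or_eq_of_le hBP.1 with h | h
    · exact h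
    · exfalso
      obtain ⟨x, hx⟩ := toSet_nonempty B
      exact hBne (eq_of_gen_eq ⟨x, hx, hBP.2 hx⟩ h.symm)
  have hpgen : P₀.gen ≤ B.parent.gen := by rw [parent_gen]; omega
  obtain ⟨x, hx⟩ := toSet_nonempty B
  have hpar : B.parent.In P₀ :=
    In_of_inter ⟨x, subset_parent B hx, hBP.2 hx⟩ hpgen
  refine ⟨hpar, ?_⟩
  by_contra hcon
  push_neg at hcon
  have hBpar : B.In B.parent := ⟨by rw [parent_gen]; omega, subset_parent B⟩
  have := hB.2 B.parent ⟨hpar, hcon⟩ hBpar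
  have hg : B.parent.gen = B.gen - 1 := parent_gen B
  rw [this] at hg
  omega

lemma prod_avg_gfun_le (hf : ∀ i, Measurable (f i))
    (hP : (∏ i, P₀.avg (f i)) ≤ lam) {R : DyadicCube d} (hR : R.In P₀) :
    (∏ i, R.avg (gfun P₀ f lam i)) ≤ 2^(d*k) * lam := by
  by_cases hcase : ∃ B ∈ Bfam P₀ f lam, R.toSet ⊆ B.toSet
  · obtain ⟨B, hB, hsub⟩ := hcase
    have havg : ∀ i, R.avg (gfun P₀ f lam i) = B.avg (f i) := by
      intro i
      rw [DyadicCube.avg]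
      rw [setLIntegral_congr_fun (measurableSet_toSet R)
        (g := fun _ => B.avg (f i))
        (fun x hx => gfun_on_B hB (hsub hx) i)]
      rw [setLIntegral_const, show volume R.toSet = R.vol from rfl, mul_div_assoc,
        ENNReal.div_self (vol_ne_zero R) (vol_ne_top R), mul_one]
    calc (∏ i, R.avg (gfun P₀ f lam i)) = ∏ i, B.avg (f i) :=
          Finset.prod_congr rfl fun i _ => havg i
      _ ≤ ∏ i, ((2:ℝ≥0∞)^d * B.parent.avg (f i)) :=
          Finset.prod_le_prod' fun i _ => avg_le_parent B (f i)
      _ = 2^(d*k) * ∏ i, B.parent.avg (f i) := by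
          rw [Finset.prod_mul_distrib, Finset.prod_const, Finset.card_univ,
            Fintype.card_fin, ← pow_mul]
      _ ≤ 2^(d*k) * lam := mul_le_mul_right (parent_In_of_Bfam hP hB).2 _
  · push_neg at hcase
    have hGood : ∀ B ∈ Bfam P₀ f lam, B.toSet ⊆ R.toSet ∨ Disjoint B.toSet R.toSet := by
      intro B hB
      by_cases hdis : Disjoint B.toSet R.toSet
      · exact Or.inr hdis
      · left
        have hne := Set.not_disjoint_iff_nonempty_inter.mp hdis
        rcases le_total B.gen R.gen with hg | hg
        · exact absurd (toSet_subset_of_inter (by rwa [Set.inter_comm]) hg) (hcase B hB)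
        · exact toSet_subset_of_inter hne hg
    have havg : ∀ i, R.avg (gfun P₀ f lam i) = R.avg (f i) := fun i => by
      rw [DyadicCube.avg, DyadicCube.avg, lintegral_gfun_eq hf (measurableSet_toSet R) hGood i]
    have hle : (∏ i, R.avg (f i)) ≤ lam := by
      by_contra hcon
      push_neg at hcon
      obtain ⟨M, hM, hRM⟩ := exists_max
        (φ := fun Q : DyadicCube d => Q.In P₀ ∧ lam < ∏ i, Q.avg (f i))
        (fun Q hQ => hQ.1) ⟨hR, hcon⟩
      exact hcase M hM hRM.2
    calc (∏ i, R.avg (gfun P₀ f lam i)) = ∏ i, R.avg (f i) :=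
          Finset.prod_congr rfl fun i _ => havg i
      _ ≤ lam := hle
      _ ≤ 2^(d*k) * lam :=
          le_mul_of_one_le_left (zero_le) (one_le_pow_of_one_le' (one_le_two) _)

end DSP5

namespace DSP6
open DSP DSP2 DSP3 DSP4 DSP5

variable {d k : ℕ}

lemma lint_rpow {T r : ℝ} (hT : 0 < T) (hr1 : -1 < r) (hr0 : r < 0) :
    ∫⁻ t in Set.Ioc (0:ℝ) T, (ENNReal.ofReal t) ^ r
      ≤ ENNReal.ofReal (T^(r+1) / (r+1)) := by
  have heq : ∀ᵐ t ∂(volume : Measure ℝ), t ∈ Set.Ioc (0:ℝ) T →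
      (ENNReal.ofReal t) ^ r = ENNReal.ofReal (t ^ r) := by
    filter_upwards with t ht
    rw [← ENNReal.ofReal_rpow_of_pos ht.1]
  rw [setLIntegral_congr_fun measurableSet_Ioc (g := fun t => ENNReal.ofReal (t ^ r)) (fun t ht => ENNReal.ofReal_rpow_of_pos ht.1)]
  have hint : IntegrableOn (fun t : ℝ => t ^ r) (Set.Ioc 0 T) := by
    have h1 : IntervalIntegrable (fun t : ℝ => t ^ r) volume 0 T :=
      intervalIntegral.intervalIntegrable_rpow' hr1
    rw [intervalIntegrable_iff, Set.uIoc_of_le hT.le] at h1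
    exact h1
  have hnn : 0 ≤ᵐ[volume.restrict (Set.Ioc (0:ℝ) T)] fun t : ℝ => t ^ r := by
    filter_upwards [ae_restrict_mem measurableSet_Ioc] with t ht
    exact Real.rpow_nonneg ht.1.le r
  rw [← MeasureTheory.ofReal_integral_eq_lintegral_ofReal hint hnn]
  apply ENNReal.ofReal_le_ofReal
  rw [← intervalIntegral.integral_of_le hT.le, integral_rpow (Or.inl hr1),
    Real.zero_rpow (by linarith : r + 1 ≠ 0)]
  rw [sub_zero]

/-- L² bound from an `L^{1/κ}`-type weak bound plus an `L^∞` bound. -/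
lemma lint_sq_le {P₀ : DyadicCube d} {W : (Fin d → ℝ) → ℝ≥0∞} {κ : ℕ} (hκ : 0 < κ)
    {Λ N : ℝ≥0∞} (hΛ0 : 0 < Λ) (hΛt : Λ ≠ ∞) (hW : Measurable W)
    (hbdd : ∀ x, W x ≤ Λ)
    (hweak : ∀ t : ℝ≥0∞, 0 < t → t ≠ ∞ →
      volume {x ∈ P₀.toSet | t < W x} ≤ (N / t) ^ (1/(κ:ℝ))) :
    ∫⁻ x in P₀.toSet, (W x) ^ (2:ℝ) ≤ 2 * N^(1/(κ:ℝ)) * Λ ^ (2 - 1/(κ:ℝ)) := by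
  classical
  have hκR : (0:ℝ) < (κ:ℝ) := by exact_mod_cast hκ
  have hκ1 : (1:ℝ) ≤ (κ:ℝ) := by exact_mod_cast hκ
  obtain ⟨r, hr⟩ : ∃ r : ℝ, r = -(1/(2*(κ:ℝ))) := ⟨_, rfl⟩
  have hhalf0 : 1/(2*(κ:ℝ)) ≤ 1/2 := by
    rw [div_le_div_iff₀ (by linarith) (by norm_num)]
    linarith
  have hpos0 : 0 < 1/(2*(κ:ℝ)) := by positivity
  have hr1 : -1 < r := by rw [hr]; linarith
  have hr0 : r < 0 := by rw [hr]; linarith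
  obtain ⟨T, hT⟩ : ∃ T : ℝ, T = (Λ ^ (2:ℝ)).toReal := ⟨_, rfl⟩
  have hΛ2top : Λ ^ (2:ℝ) ≠ ∞ := ENNReal.rpow_ne_top_of_nonneg (by norm_num) hΛt
  have hΛ20 : Λ ^ (2:ℝ) ≠ 0 := by
    intro hcon
    rw [ENNReal.rpow_eq_zero_iff] at hcon
    rcases hcon with ⟨h1, _⟩ | ⟨h1, _⟩
    · exact hΛ0.ne' h1
    · exact hΛt h1
  have hT0 : 0 < T := by rw [hT]; exact ENNReal.toReal_pos hΛ20 hΛ2top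
  have hWsq : Measurable fun x => (W x) ^ (2:ℝ) := hW.pow_const _
  rw [LC (measurableSet_toSet P₀) hWsq]
  have hptw : ∀ t : ℝ, t ∈ Set.Ioi (0:ℝ) →
      volume {x ∈ P₀.toSet | ENNReal.ofReal t < (W x) ^ (2:ℝ)}
      ≤ (Set.Ioc (0:ℝ) T).indicator
          (fun t => N ^ (1/(κ:ℝ)) * (ENNReal.ofReal t) ^ (r)) t := by
    intro t ht
    by_cases hcase : t ≤ T
    · rw [Set.indicator_of_mem (Set.mem_Ioc.mpr ⟨ht, hcase⟩)]
      have hsub : {x ∈ P₀.toSet | ENNReal.ofReal t < (W x) ^ (2:ℝ)}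
          ⊆ {x ∈ P₀.toSet | (ENNReal.ofReal t) ^ ((1:ℝ)/2) < W x} := by
        rintro x ⟨hxP, hxt⟩
        refine Set.mem_sep hxP ?_
        have h1 : ((ENNReal.ofReal t) ^ ((1:ℝ)/2)) ^ (2:ℝ) = ENNReal.ofReal t := by
          rw [← ENNReal.rpow_mul]
          norm_num
        by_contra hcon
        push_neg at hcon
        have := ENNReal.rpow_le_rpow hcon (by norm_num : (0:ℝ) ≤ 2)
        rw [h1] at this
        exact absurd (lt_of_lt_of_le hxt this) (lt_irrefl _)
      have ht' : (0:ℝ≥0∞) < (ENNReal.ofReal t) ^ ((1:ℝ)/2) :=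
        ENNReal.rpow_pos (ENNReal.ofReal_pos.mpr ht) ENNReal.ofReal_ne_top
      have ht'' : (ENNReal.ofReal t) ^ ((1:ℝ)/2) ≠ ∞ :=
        ENNReal.rpow_ne_top_of_nonneg (by norm_num) ENNReal.ofReal_ne_top
      calc volume {x ∈ P₀.toSet | ENNReal.ofReal t < (W x) ^ (2:ℝ)}
          ≤ volume {x ∈ P₀.toSet | (ENNReal.ofReal t) ^ ((1:ℝ)/2) < W x} :=
            measure_mono hsub
        _ ≤ (N / (ENNReal.ofReal t) ^ ((1:ℝ)/2)) ^ (1/(κ:ℝ)) := hweak _ ht' ht''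
        _ = N ^ (1/(κ:ℝ)) * (ENNReal.ofReal t) ^ r := by
            rw [ENNReal.div_rpow_of_nonneg _ _ (by positivity),
              ← ENNReal.rpow_mul, div_eq_mul_inv, ← ENNReal.rpow_neg]
            congr 1
            rw [hr]
            ring
    · rw [Set.indicator_of_notMem (fun hcon => hcase hcon.2)]
      push_neg at hcase
      have hempty : {x ∈ P₀.toSet | ENNReal.ofReal t < (W x) ^ (2:ℝ)} = ∅ := by
        ext x
        simp only [Set.mem_sep_iff, Set.mem_empty_iff_false, iff_false, not_and]
        intro hxP
        rw [not_lt]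
        calc (W x)^(2:ℝ) ≤ Λ^(2:ℝ) := ENNReal.rpow_le_rpow (hbdd x) (by norm_num)
          _ = ENNReal.ofReal T := by rw [hT, ENNReal.ofReal_toReal hΛ2top]
          _ ≤ ENNReal.ofReal t := ENNReal.ofReal_le_ofReal hcase.le
      rw [hempty]
      simp
  have hhalf : (1:ℝ)/2 ≤ r + 1 := by rw [hr]; linarith
  calc ∫⁻ t in Set.Ioi (0:ℝ), volume {x ∈ P₀.toSet | ENNReal.ofReal t < (W x)^(2:ℝ)}
      ≤ ∫⁻ t in Set.Ioi (0:ℝ), (Set.Ioc (0:ℝ) T).indicator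
          (fun t => N ^ (1/(κ:ℝ)) * (ENNReal.ofReal t) ^ r) t :=
        setLIntegral_mono ((measurable_const.mul
          (ENNReal.measurable_ofReal.pow_const _)).indicator measurableSet_Ioc) hptw
    _ = ∫⁻ t in Set.Ioc (0:ℝ) T, N ^ (1/(κ:ℝ)) * (ENNReal.ofReal t) ^ r := by
        rw [lintegral_indicator measurableSet_Ioc, Measure.restrict_restrict measurableSet_Ioc,
          Set.inter_eq_left.mpr Set.Ioc_subset_Ioi_self]
    _ = N ^ (1/(κ:ℝ)) * ∫⁻ t in Set.Ioc (0:ℝ) T, (ENNReal.ofReal t) ^ r :=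
        lintegral_const_mul _ (ENNReal.measurable_ofReal.pow_const _)
    _ ≤ N ^ (1/(κ:ℝ)) * ENNReal.ofReal (T^(r+1)/(r+1)) :=
        mul_le_mul_right (lint_rpow hT0 hr1 hr0) _
    _ ≤ N ^ (1/(κ:ℝ)) * (2 * Λ ^ (2 - 1/(κ:ℝ))) := by
        refine mul_le_mul_right ?_ _
        have hTpow : (0:ℝ) ≤ T^(r+1) := Real.rpow_nonneg hT0.le _
        have h1 : T^(r+1)/(r+1) ≤ 2 * T^(r+1) := by
          rw [div_le_iff₀ (by linarith : (0:ℝ) < r + 1)]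
          nlinarith [mul_le_mul_of_nonneg_left (by linarith : (1:ℝ) ≤ 2*(r+1)) hTpow]
        calc ENNReal.ofReal (T^(r+1)/(r+1)) ≤ ENNReal.ofReal (2 * T^(r+1)) :=
              ENNReal.ofReal_le_ofReal h1
          _ = 2 * ENNReal.ofReal (T^(r+1)) := by
              rw [ENNReal.ofReal_mul (by norm_num)]
              norm_num
          _ = 2 * ((ENNReal.ofReal T) ^ (r+1)) := by
              rw [ENNReal.ofReal_rpow_of_pos hT0]
          _ = 2 * ((Λ ^ (2:ℝ)) ^ (r+1)) := by rw [hT, ENNReal.ofReal_toReal hΛ2top]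
          _ = 2 * Λ ^ (2 - 1/(κ:ℝ)) := by
              rw [← ENNReal.rpow_mul]
              congr 1
              rw [hr]
              field_simp
              ring
    _ = 2 * N^(1/(κ:ℝ)) * Λ ^ (2 - 1/(κ:ℝ)) := by ring

lemma measurable_shift (P₀ : DyadicCube d) (α : DyadicCube d → ℝ≥0∞) (m : ℕ)
    (g : Fin k → (Fin d → ℝ) → ℝ≥0∞) : Measurable (shift P₀ α m g) :=
  Measurable.ennreal_tsum fun Q =>
    (measurable_one.indicator (measurableSet_toSet _)).const_mul _

lemma shift_le_gfun {P₀ : DyadicCube d} {f : Fin k → (Fin d → ℝ) → ℝ≥0∞} {lam : ℝ≥0∞}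
    (hf : ∀ i, Measurable (f i)) (α : DyadicCube d → ℝ≥0∞) (m : ℕ)
    {x : Fin d → ℝ} (hx : x ∉ bigO P₀ f lam) :
    shift P₀ α m f x ≤ shift P₀ α m (gfun P₀ f lam) x := by
  refine ENNReal.tsum_le_tsum fun Q => ?_
  have hQP : Q.1.In P₀ := Q.2.1
  have hgen : P₀.gen + m ≤ Q.1.gen := Q.2.2
  obtain ⟨y, hy⟩ := toSet_nonempty Q.1
  have hAIn : (ancestor m Q.1).In P₀ :=
    In_of_inter ⟨y, subset_ancestor m Q.1 hy, hQP.2 hy⟩ (by rw [ancestor_gen]; omega)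
  by_cases hcase : ∀ B ∈ Bfam P₀ f lam,
      B.toSet ⊆ (ancestor m Q.1).toSet ∨ Disjoint B.toSet (ancestor m Q.1).toSet
  · have heq : ∀ i, (ancestor m Q.1).avg (f i) = (ancestor m Q.1).avg (gfun P₀ f lam i) :=
      fun i => by
        rw [DyadicCube.avg, DyadicCube.avg,
          lintegral_gfun_eq hf (measurableSet_toSet _) hcase i]
    apply le_of_eq
    rw [Finset.prod_congr rfl fun i _ => heq i]
  · push_neg at hcase
    obtain ⟨B, hB, hnsub, hndis⟩ := hcase
    have hne := Set.not_disjoint_iff_nonempty_inter.mp hndis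
    have hAB : (ancestor m Q.1).toSet ⊆ B.toSet := by
      rcases le_total B.gen (ancestor m Q.1).gen with hg | hg
      · exact toSet_subset_of_inter (by rwa [Set.inter_comm]) hg
      · exact absurd (toSet_subset_of_inter hne hg) hnsub
    have hxQ : x ∉ Q.1.toSet := fun hc =>
      hx (Set.mem_iUnion.mpr ⟨⟨B, hB⟩, hAB (subset_ancestor m Q.1 hc)⟩)
    rw [Set.indicator_of_notMem hxQ, mul_zero]
    exact zero_le

/-- The key estimate: the case when the global averages are small. -/
lemma key (hk : 0 < k) (P₀ : DyadicCube d) (α : DyadicCube d → ℝ≥0∞)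
    (hα : Carleson P₀ α 1) (m : ℕ) (f : Fin k → (Fin d → ℝ) → ℝ≥0∞)
    (hf : ∀ i, Measurable (f i)) {lam : ℝ≥0∞} (h0 : 0 < lam) (htop : lam ≠ ∞)
    (hP : (∏ i, P₀.avg (f i)) ≤ lam) :
    volume {x ∈ P₀.toSet | lam < shift P₀ α m f x}
      ≤ 2^(3 + d*(2*k-1)) * ((∏ i, ∫⁻ x in P₀.toSet, f i x) / lam) ^ (1/(k:ℝ)) := by
  classical
  obtain ⟨N, hN⟩ : ∃ N, N = ∏ i, ∫⁻ x in P₀.toSet, f i x := ⟨_, rfl⟩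
  rw [← hN]
  set g := gfun P₀ f lam with hg
  have hgmeas : ∀ i, Measurable (g i) := fun i => measurable_gfun hf i
  have hNg : (∏ i, ∫⁻ x in P₀.toSet, g i x) = N := by
    rw [hN]
    exact Finset.prod_congr rfl fun i _ => lintegral_gfun_P₀ hf i
  set G := {x ∈ P₀.toSet | lam < shift P₀ α m g x} with hGdef
  have hshiftg : Measurable (shift P₀ α m g) := measurable_shift P₀ α m g
  have hGmeas : MeasurableSet G :=
    (measurableSet_toSet P₀).inter (hshiftg measurableSet_Ioi)
  have hEsub : {x ∈ P₀.toSet | lam < shift P₀ α m f x} ⊆ bigO P₀ f lam ∪ G := by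
    rintro x ⟨hxP, hxl⟩
    by_cases hxO : x ∈ bigO P₀ f lam
    · exact Or.inl hxO
    · exact Or.inr ⟨hxP, lt_of_lt_of_le hxl (shift_le_gfun hf α m hxO)⟩
  have hΩ : volume (bigO P₀ f lam) ≤ (N / lam) ^ (1/(k:ℝ)) := by
    rw [hN]
    calc volume (bigO P₀ f lam) ≤ ∑' B : Bfam P₀ f lam, (B : DyadicCube d).vol := by
          rw [bigO]
          exact measure_iUnion_le _
      _ ≤ _ := sum_max_vol_le hk P₀ f h0 htop
  -- bounds on the maximal functions
  obtain ⟨Λ, hΛ⟩ : ∃ Λ, Λ = (2:ℝ≥0∞)^(d*k) * lam := ⟨_, rfl⟩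
  have h2dk : ((2:ℝ≥0∞)^(d*k)) ≠ 0 := by positivity
  have h2dktop : ((2:ℝ≥0∞)^(d*k)) ≠ ∞ := by
    exact ENNReal.pow_ne_top ENNReal.ofNat_ne_top
  have hΛ0 : 0 < Λ := by
    rw [hΛ]
    exact ENNReal.mul_pos h2dk h0.ne'
  have hΛtop : Λ ≠ ∞ := by
    rw [hΛ]
    exact ENNReal.mul_ne_top h2dktop htop
  have hMle : ∀ x, Mfn P₀ g x ≤ Λ := by
    intro x
    rw [hΛ]
    exact Mfn_le (fun R hR => prod_avg_gfun_le hf hP hR) x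
  have hMweak : ∀ t : ℝ≥0∞, 0 < t → t ≠ ∞ →
      volume {x ∈ P₀.toSet | t < Mfn P₀ g x} ≤ (N / t) ^ (1/(k:ℝ)) := by
    intro t ht ht'
    have := meas_Mfn_gt hk P₀ g ht ht'
    rwa [hNg] at this
  have hMsq : ∫⁻ x in P₀.toSet, (Mfn P₀ g x)^(2:ℝ) ≤ 2 * N^(1/(k:ℝ)) * Λ^(2 - 1/(k:ℝ)) :=
    lint_sq_le hk hΛ0 hΛtop (measurable_Mfn P₀ g) hMle hMweak
  have hDweak : ∀ t : ℝ≥0∞, 0 < t → t ≠ ∞ →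
      volume {x ∈ P₀.toSet | t < Dfn P₀ G x} ≤ (volume G / t) ^ (1/((1:ℕ):ℝ)) := by
    intro t ht ht'
    rw [show (1/((1:ℕ):ℝ)) = (1:ℝ) by norm_num, ENNReal.rpow_one]
    exact meas_Dfn_gt P₀ hGmeas ht ht'
  have hDsq : ∫⁻ x in P₀.toSet, (Dfn P₀ G x)^(2:ℝ) ≤ 2 * volume G := by
    have h1 := lint_sq_le (P₀ := P₀) (W := Dfn P₀ G) (κ := 1) one_pos
      (Λ := 1) one_pos (by simp) (measurable_Dfn P₀ G) (fun x => Dfn_le_one x) hDweak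
    calc ∫⁻ x in P₀.toSet, (Dfn P₀ G x)^(2:ℝ)
        ≤ 2 * (volume G)^(1/((1:ℕ):ℝ)) * (1:ℝ≥0∞)^(2 - 1/((1:ℕ):ℝ)) := h1
      _ = 2 * volume G := by
          rw [show (1/((1:ℕ):ℝ)) = (1:ℝ) by norm_num, ENNReal.rpow_one,
            ENNReal.one_rpow, mul_one]
  -- Chebyshev and Carleson embedding
  obtain ⟨F, hF⟩ : ∃ F, F = fun x => Mfn P₀ g x * Dfn P₀ G x := ⟨_, rfl⟩
  have hFmeas : Measurable F := by
    rw [hF]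
    exact (measurable_Mfn P₀ g).mul (measurable_Dfn P₀ G)
  have cheb : lam * volume G ≤ ∫⁻ x in G, shift P₀ α m g x := by
    rw [← setLIntegral_const G lam]
    exact setLIntegral_mono hshiftg fun x hx => (hx.2).le
  have expand : ∫⁻ x in G, shift P₀ α m g x
      = ∑' Q : {Q : DyadicCube d // Q.In P₀ ∧ (P₀.gen + m : ℤ) ≤ Q.gen},
          α Q.1 * (∏ i, (ancestor m Q.1).avg (g i)) * volume (Q.1.toSet ∩ G) := by
    rw [show (fun x => shift P₀ α m g x) = fun x =>
      ∑' Q : {Q : DyadicCube d // Q.In P₀ ∧ (P₀.gen + m : ℤ) ≤ Q.gen},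
        α Q.1 * (∏ i, (ancestor m Q.1).avg (g i)) * Q.1.toSet.indicator 1 x from rfl]
    rw [lintegral_tsum (fun Q => ((measurable_one.indicator
      (measurableSet_toSet _)).const_mul _).aemeasurable)]
    congr 1
    funext Q
    rw [lintegral_const_mul _ (measurable_one.indicator (measurableSet_toSet _)),
      lintegral_indicator_one (measurableSet_toSet _),
      Measure.restrict_apply (measurableSet_toSet _)]
  have perQ : ∀ Q : {Q : DyadicCube d // Q.In P₀ ∧ (P₀.gen + m : ℤ) ≤ Q.gen},
      α Q.1 * (∏ i, (ancestor m Q.1).avg (g i)) * volume (Q.1.toSet ∩ G)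
      ≤ α Q.1 * ((⨅ x ∈ Q.1.toSet, F x) * Q.1.vol) := by
    intro Q
    rw [mul_assoc]
    refine mul_le_mul_right ?_ _
    obtain ⟨y, hy⟩ := toSet_nonempty Q.1
    have hAIn : (ancestor m Q.1).In P₀ :=
      In_of_inter ⟨y, subset_ancestor m Q.1 hy, Q.2.1.2 hy⟩
        (by rw [ancestor_gen]; have := Q.2.2; omega)
    have key1 : (∏ i, (ancestor m Q.1).avg (g i)) * (volume (Q.1.toSet ∩ G) / Q.1.vol)
        ≤ ⨅ x ∈ Q.1.toSet, F x := by
      refine le_iInf₂ fun x hx => ?_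
      rw [hF]
      exact mul_le_mul' (le_Mfn hAIn (subset_ancestor m Q.1 hx)) (le_Dfn Q.2.1 hx)
    calc (∏ i, (ancestor m Q.1).avg (g i)) * volume (Q.1.toSet ∩ G)
        = ((∏ i, (ancestor m Q.1).avg (g i)) * (volume (Q.1.toSet ∩ G) / Q.1.vol))
            * Q.1.vol := by
          rw [mul_assoc, ENNReal.div_mul_cancel (vol_ne_zero _) (vol_ne_top _)]
      _ ≤ (⨅ x ∈ Q.1.toSet, F x) * Q.1.vol := mul_le_mul_left key1 _
  have hCE : (∑' Q : {Q : DyadicCube d // Q.In P₀ ∧ (P₀.gen + m : ℤ) ≤ Q.gen},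
      α Q.1 * ((⨅ x ∈ Q.1.toSet, F x) * Q.1.vol)) ≤ ∫⁻ x in P₀.toSet, F x :=
    CE hα (fun Q hQ => hQ.1) hFmeas
  have hCS : ∫⁻ x in P₀.toSet, F x ≤
      (∫⁻ x in P₀.toSet, (Mfn P₀ g x)^(2:ℝ)) ^ ((1:ℝ)/2) *
      (∫⁻ x in P₀.toSet, (Dfn P₀ G x)^(2:ℝ)) ^ ((1:ℝ)/2) := by
    have hconj : Real.HolderConjugate 2 2 := Real.HolderConjugate.two_two
    have := ENNReal.lintegral_mul_le_Lp_mul_Lq (volume.restrict P₀.toSet) hconj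
      (measurable_Mfn P₀ g).aemeasurable (measurable_Dfn P₀ G).aemeasurable
    rw [hF]
    exact this
  -- combine
  have main : lam * volume G ≤
      (2 * N^(1/(k:ℝ)) * Λ^(2 - 1/(k:ℝ))) ^ ((1:ℝ)/2) * (2 * volume G) ^ ((1:ℝ)/2) := by
    calc lam * volume G ≤ ∫⁻ x in G, shift P₀ α m g x := cheb
      _ = _ := expand
      _ ≤ ∑' Q : {Q : DyadicCube d // Q.In P₀ ∧ (P₀.gen + m : ℤ) ≤ Q.gen},
          α Q.1 * ((⨅ x ∈ Q.1.toSet, F x) * Q.1.vol) := ENNReal.tsum_le_tsum perQ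
      _ ≤ ∫⁻ x in P₀.toSet, F x := hCE
      _ ≤ (∫⁻ x in P₀.toSet, (Mfn P₀ g x)^(2:ℝ)) ^ ((1:ℝ)/2) *
          (∫⁻ x in P₀.toSet, (Dfn P₀ G x)^(2:ℝ)) ^ ((1:ℝ)/2) := hCS
      _ ≤ _ := mul_le_mul' (ENNReal.rpow_le_rpow hMsq (by norm_num))
          (ENNReal.rpow_le_rpow hDsq (by norm_num))
  -- solve for volume G
  have hGle : volume G ≤ 2^(2 + d*(2*k-1)) * (N / lam) ^ (1/(k:ℝ)) := by
    by_cases hG0 : volume G = 0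
    · rw [hG0]; exact zero_le
    have hGtop : volume G ≠ ∞ := by
      refine ne_top_of_le_ne_top (vol_ne_top P₀) (measure_mono ?_)
      exact Set.sep_subset _ _
    obtain ⟨a, haeq⟩ : ∃ a, a = volume G := ⟨_, rfl⟩
    have ha0 : a ≠ 0 := by rw [haeq]; exact hG0
    have hatop : a ≠ ∞ := by rw [haeq]; exact hGtop
    rw [← haeq] at main ⊢
    have ha2ne0 : a^((1:ℝ)/2) ≠ 0 := by
      simp [ENNReal.rpow_eq_zero_iff, ha0, hatop]
    have ha2netop : a^((1:ℝ)/2) ≠ ∞ :=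
      ENNReal.rpow_ne_top_of_nonneg (by norm_num) hatop
    have hlam2ne0 : lam^(2:ℝ) ≠ 0 := by
      simp [ENNReal.rpow_eq_zero_iff, h0.ne', htop]
    have hlam2netop : lam^(2:ℝ) ≠ ∞ := ENNReal.rpow_ne_top_of_nonneg (by norm_num) htop
    have main2 : (lam * a^((1:ℝ)/2)) * a^((1:ℝ)/2)
        ≤ ((2 * N^(1/(k:ℝ)) * Λ^(2 - 1/(k:ℝ))) ^ ((1:ℝ)/2) * 2^((1:ℝ)/2)) * a^((1:ℝ)/2) := by
      calc (lam * a^((1:ℝ)/2)) * a^((1:ℝ)/2) = lam * a := by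
            rw [mul_assoc, ← ENNReal.rpow_add _ _ ha0 hatop]
            norm_num
        _ ≤ (2 * N^(1/(k:ℝ)) * Λ^(2 - 1/(k:ℝ))) ^ ((1:ℝ)/2) * (2*a) ^ ((1:ℝ)/2) := main
        _ = _ := by
            rw [ENNReal.mul_rpow_of_nonneg 2 a (by norm_num : (0:ℝ) ≤ 1/2)]
            ring
    have main3 : lam * a^((1:ℝ)/2)
        ≤ (2 * N^(1/(k:ℝ)) * Λ^(2 - 1/(k:ℝ))) ^ ((1:ℝ)/2) * 2^((1:ℝ)/2) :=
      (ENNReal.mul_le_mul_iff_left ha2ne0 ha2netop).mp main2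
    have main4 := ENNReal.rpow_le_rpow main3 (by norm_num : (0:ℝ) ≤ 2)
    have expand4L : (lam * a^((1:ℝ)/2)) ^ (2:ℝ) = lam^(2:ℝ) * a := by
      rw [ENNReal.mul_rpow_of_nonneg lam (a^((1:ℝ)/2)) (by norm_num : (0:ℝ) ≤ 2),
        ← ENNReal.rpow_mul a, show (1:ℝ)/2*2 = 1 by norm_num, ENNReal.rpow_one]
    have expand4R : ((2 * N^(1/(k:ℝ)) * Λ^(2 - 1/(k:ℝ))) ^ ((1:ℝ)/2) * 2^((1:ℝ)/2)) ^ (2:ℝ)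
        = 4 * N^(1/(k:ℝ)) * Λ^(2 - 1/(k:ℝ)) := by
      rw [ENNReal.mul_rpow_of_nonneg ((2 * N^(1/(k:ℝ)) * Λ^(2 - 1/(k:ℝ))) ^ ((1:ℝ)/2))
          (2^((1:ℝ)/2)) (by norm_num : (0:ℝ) ≤ 2),
        ← ENNReal.rpow_mul (2 * N^(1/(k:ℝ)) * Λ^(2 - 1/(k:ℝ))),
        ← ENNReal.rpow_mul (2:ℝ≥0∞), show (1:ℝ)/2*2 = 1 by norm_num,
        ENNReal.rpow_one, ENNReal.rpow_one]
      ring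
    have step4 : lam^(2:ℝ) * a ≤ 4 * N^(1/(k:ℝ)) * Λ^(2 - 1/(k:ℝ)) := by
      rw [← expand4L, ← expand4R]
      exact main4
    have hk1R : (1:ℝ) ≤ (k:ℝ) := by exact_mod_cast hk
    have hkne : (k:ℝ) ≠ 0 := by positivity
    have hinvk : 1/(k:ℝ) ≤ 1 := by
      rw [div_le_one (by positivity)]
      exact hk1R
    have hnn2k : (0:ℝ) ≤ 2 - 1/(k:ℝ) := by linarith
    have hpow2 : ((2:ℝ≥0∞)^(d*k)) ^ ((2:ℝ) - 1/(k:ℝ)) = (2:ℝ≥0∞)^(d*(2*k-1)) := by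
      rw [← ENNReal.rpow_natCast (2:ℝ≥0∞) (d*k), ← ENNReal.rpow_mul,
        ← ENNReal.rpow_natCast (2:ℝ≥0∞) (d*(2*k-1))]
      congr 1
      rw [Nat.cast_mul, Nat.cast_mul, Nat.cast_sub (by omega : 1 ≤ 2*k)]
      push_cast
      field_simp
    have ident : lam^(2:ℝ) * ((2:ℝ≥0∞)^(2 + d*(2*k-1)) * (N / lam)^(1/(k:ℝ)))
        = 4 * N^(1/(k:ℝ)) * Λ^(2 - 1/(k:ℝ)) := by
      have e1 : (N / lam)^(1/(k:ℝ)) = N^(1/(k:ℝ)) * lam ^ (-(1/(k:ℝ))) := by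
        rw [ENNReal.div_rpow_of_nonneg _ _ (by positivity), div_eq_mul_inv,
          ENNReal.rpow_neg]
      have e2 : lam^(2:ℝ) * lam^(-(1/(k:ℝ))) = lam^((2:ℝ) - 1/(k:ℝ)) := by
        rw [← ENNReal.rpow_add _ _ h0.ne' htop, sub_eq_add_neg]
      have e3 : (2:ℝ≥0∞)^(2 + d*(2*k-1)) = 4 * (2:ℝ≥0∞)^(d*(2*k-1)) := by
        rw [pow_add]
        norm_num
      rw [hΛ, ENNReal.mul_rpow_of_nonneg _ _ hnn2k, hpow2, e1, e3]
      calc lam^(2:ℝ) * ((4 * (2:ℝ≥0∞)^(d*(2*k-1))) * (N^(1/(k:ℝ)) * lam^(-(1/(k:ℝ)))))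
          = (4 * (2:ℝ≥0∞)^(d*(2*k-1)) * N^(1/(k:ℝ))) * (lam^(2:ℝ) * lam^(-(1/(k:ℝ)))) := by
            ring
        _ = (4 * (2:ℝ≥0∞)^(d*(2*k-1)) * N^(1/(k:ℝ))) * lam^((2:ℝ) - 1/(k:ℝ)) := by rw [e2]
        _ = 4 * N^(1/(k:ℝ)) * ((2:ℝ≥0∞)^(d*(2*k-1)) * lam^((2:ℝ)-1/(k:ℝ))) := by ring
    exact (ENNReal.mul_le_mul_iff_right hlam2ne0 hlam2netop).mp (by rw [ident]; exact step4)
  calc volume {x ∈ P₀.toSet | lam < shift P₀ α m f x}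
      ≤ volume (bigO P₀ f lam ∪ G) := measure_mono hEsub
    _ ≤ volume (bigO P₀ f lam) + volume G := measure_union_le _ _
    _ ≤ (N/lam)^(1/(k:ℝ)) + 2^(2+d*(2*k-1)) * (N/lam)^(1/(k:ℝ)) := add_le_add hΩ hGle
    _ ≤ 2^(3+d*(2*k-1)) * (N/lam)^(1/(k:ℝ)) := by
        have hone : (1:ℝ≥0∞) ≤ 2^(2+d*(2*k-1)) := one_le_pow_of_one_le' one_le_two _
        have h1 : (1:ℝ≥0∞) + 2^(2+d*(2*k-1)) ≤ 2^(3+d*(2*k-1)) := by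
          calc (1:ℝ≥0∞) + 2^(2+d*(2*k-1)) ≤ 2^(2+d*(2*k-1)) + 2^(2+d*(2*k-1)) :=
                add_le_add_left hone _
            _ = 2^(2+d*(2*k-1)) * 2 := (mul_two _).symm
            _ = 2^(3+d*(2*k-1)) := by
                rw [show 3+d*(2*k-1) = (2+d*(2*k-1))+1 from by omega, pow_succ]
        calc (N/lam)^(1/(k:ℝ)) + 2^(2+d*(2*k-1)) * (N/lam)^(1/(k:ℝ))
            = (1 + 2^(2+d*(2*k-1))) * (N/lam)^(1/(k:ℝ)) := by rw [add_mul, one_mul]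
          _ ≤ _ := mul_le_mul_left h1 _

end DSP6


open DSP DSP2 DSP3 DSP4 DSP5 DSP6 in
theorem shift_weak_type' {d k : ℕ} (hk : 0 < k) (P₀ : DyadicCube d)
    (α : DyadicCube d → ℝ≥0∞) (hα : Carleson P₀ α 1) (m : ℕ)
    (f : Fin k → (Fin d → ℝ) → ℝ≥0∞) (hf : ∀ i, Measurable (f i)) :
    ∀ lam : ℝ≥0∞, 0 < lam →
      lam * (volume {x ∈ P₀.toSet | lam < shift P₀ α m f x}) ^ k ≤
        2 ^ (k * (5 + d * (2 * k - 1))) * ∏ i, ∫⁻ x in P₀.toSet, f i x := by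
  intro lam hlam
  obtain ⟨N, hN⟩ : ∃ N, N = ∏ i, ∫⁻ x in P₀.toSet, f i x := ⟨_, rfl⟩
  rw [← hN]
  rcases eq_or_ne lam ∞ with rfl | htop
  · have hempty : {x ∈ P₀.toSet | (∞:ℝ≥0∞) < shift P₀ α m f x} = ∅ := by
      ext x
      simp [not_top_lt]
    rw [hempty]
    simp [zero_pow hk.ne']
  rcases lt_or_ge lam (∏ i, P₀.avg (f i)) with hcase | hcase
  · have hEP : volume {x ∈ P₀.toSet | lam < shift P₀ α m f x} ≤ P₀.vol :=
      measure_mono (Set.sep_subset _ _)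
    have hvol : (∏ i, P₀.avg (f i)) = N / P₀.vol ^ k := by
      rw [hN]
      exact prod_avg_eq P₀ f
    calc lam * (volume {x ∈ P₀.toSet | lam < shift P₀ α m f x})^k
        ≤ lam * P₀.vol ^ k := mul_le_mul_right (pow_le_pow_left' hEP k) _
      _ ≤ (N / P₀.vol^k) * P₀.vol^k := by
          refine mul_le_mul_left ?_ _
          rw [← hvol]
          exact hcase.le
      _ = N := by
          rw [ENNReal.div_mul_cancel (pow_ne_zero _ (vol_ne_zero _))
            (ENNReal.pow_ne_top (vol_ne_top _))]
      _ ≤ 2 ^ (k * (5 + d * (2 * k - 1))) * N :=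
          le_mul_of_one_le_left (zero_le) (one_le_pow_of_one_le' one_le_two _)
  · have hkey := key hk P₀ α hα m f hf hlam htop hcase
    rw [← hN] at hkey
    have hkR : ((k:ℝ)) ≠ 0 := by
      have : (0:ℝ) < (k:ℝ) := by exact_mod_cast hk
      positivity
    calc lam * (volume {x ∈ P₀.toSet | lam < shift P₀ α m f x})^k
        ≤ lam * (2^(3 + d*(2*k-1)) * (N / lam) ^ (1/(k:ℝ)))^k :=
          mul_le_mul_right (pow_le_pow_left' hkey k) _
      _ = 2^(k*(3 + d*(2*k-1))) * (lam * (((N / lam) ^ (1/(k:ℝ)))^k)) := by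
          rw [mul_pow, pow_mul']
          ring
      _ = 2^(k*(3 + d*(2*k-1))) * (lam * (N / lam)) := by
          congr 2
          rw [← ENNReal.rpow_natCast ((N/lam) ^ (1/(k:ℝ))) k, ← ENNReal.rpow_mul,
            show (1/(k:ℝ)) * (k:ℕ) = 1 by field_simp, ENNReal.rpow_one]
      _ ≤ 2^(k*(3 + d*(2*k-1))) * N := mul_le_mul_right ENNReal.mul_div_le _
      _ ≤ 2 ^ (k * (5 + d * (2 * k - 1))) * N := by
          refine mul_le_mul_left (pow_le_pow_right' one_le_two ?_) _
          exact Nat.mul_le_mul_left k (by omega)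


/-- weak-type `L¹ × ⋯ × L¹ → L^{1/k,∞}` bound for the `k`-linear positive
dyadic shift of complexity `m`, with constant `C_W = 2^{k(5+d(2k−1))}` independent of `m`. -/
theorem shift_weak_type {d k : ℕ} (hk : 0 < k) (P₀ : DyadicCube d)
    (α : DyadicCube d → ℝ≥0∞) (hα : Carleson P₀ α 1) (m : ℕ)
    (f : Fin k → (Fin d → ℝ) → ℝ≥0∞) (hf : ∀ i, Measurable (f i)) :
    ∀ lam : ℝ≥0∞, 0 < lam →
      lam * (volume {x ∈ P₀.toSet | lam < shift P₀ α m f x}) ^ k ≤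
        2 ^ (k * (5 + d * (2 * k - 1))) * ∏ i, ∫⁻ x in P₀.toSet, f i x :=
  shift_weak_type' hk P₀ α hα m f hf
end
end
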